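/- arXiv:0705.2486 — 10 statements merged into one kernel-verified Lean document; each statement's English description precedes it below -/
import Mathlib

section
/- Let U(T) = Σ_{n≥0} U_n T^n be a formal power series over ℂ and set u(T) = −T^{−1} + U(T), a formal Laurent series. Let v = u² + u′, where u′ denotes the formal derivative (so u′ = T^{−2} + U′). Then v has the form v = 2T^{−2} + Σ_{n≥−1} v_n T^n, where v_{−1} = −2U_0 and v_n = (coefficient of T^n in U² + U′) − 2U_{n+1} for n ≥ 0, and these coefficients satisfy the cubic relation (1/4)·v_{−1}³ − v_0·v_{−1} + v_1 = 0. -/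
open scoped PowerSeries

/-- The formal derivative of a Laurent series: `(Σ aₙ Tⁿ)' = Σ n aₙ Tⁿ⁻¹`. -/
noncomputable def lderiv (f : LaurentSeries ℂ) : LaurentSeries ℂ :=
  HahnSeries.single (-1 : ℤ) (1 : ℂ) *
    { coeff := fun n => (n : ℂ) * f.coeff n
      isPWO_support' := f.isPWO_support'.mono (by
        intro n hn
        simp only [Function.mem_support] at hn ⊢
        exact fun h => hn (by rw [h, mul_zero])) }

/-- A Miura datum with residue `-1`: `u = -T⁻¹ + U` with `U ∈ ℂ[[T]]`. -/
noncomputable def miura (U : PowerSeries ℂ) : LaurentSeries ℂ :=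
  -(HahnSeries.single (-1 : ℤ) (1 : ℂ)) + HahnSeries.ofPowerSeries ℤ ℂ U

lemma lderiv_coeff (f : LaurentSeries ℂ) (n : ℤ) :
    (lderiv f).coeff n = ((n+1 : ℤ) : ℂ) * f.coeff (n+1) := by
  unfold lderiv
  rw [show n = (n+1) + (-1) by ring, HahnSeries.coeff_single_mul_add, one_mul]
  simp

lemma ofPS_coeff_neg (U : PowerSeries ℂ) (n : ℤ) (hn : n < 0) :
    (HahnSeries.ofPowerSeries ℤ ℂ U).coeff n = 0 := by
  rw [HahnSeries.ofPowerSeries_apply]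
  apply HahnSeries.embDomain_notin_range
  rintro ⟨m, rfl⟩
  simp at hn
  omega

lemma sW_coeff (U : PowerSeries ℂ) (n : ℤ) :
    (HahnSeries.single (-1 : ℤ) (1 : ℂ) * HahnSeries.ofPowerSeries ℤ ℂ U).coeff n
      = (HahnSeries.ofPowerSeries ℤ ℂ U).coeff (n+1) := by
  have h := HahnSeries.coeff_single_mul_add (r := (1:ℂ))
    (x := HahnSeries.ofPowerSeries ℤ ℂ U) (a := n+1) (b := (-1:ℤ))
  rw [one_mul] at h
  rw [show (n+1) + (-1:ℤ) = n by ring] at h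
  exact h

lemma lderiv_add (f g : LaurentSeries ℂ) : lderiv (f + g) = lderiv f + lderiv g := by
  ext n
  simp [lderiv_coeff, HahnSeries.coeff_add]
  ring

lemma lderiv_neg (f : LaurentSeries ℂ) : lderiv (-f) = -lderiv f := by
  ext n
  simp [lderiv_coeff]

lemma lderiv_s : lderiv (HahnSeries.single (-1 : ℤ) (1 : ℂ)) =
    HahnSeries.single (-2 : ℤ) (-1 : ℂ) := by
  ext n
  rw [lderiv_coeff]
  rcases eq_or_ne n (-2 : ℤ) with rfl | h
  · norm_num [HahnSeries.coeff_single]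
  · rw [HahnSeries.coeff_single_of_ne h, HahnSeries.coeff_single_of_ne (by omega)]
    rcases eq_or_ne n (-1 : ℤ) with rfl | h2
    · norm_num
    · rw [mul_zero]

lemma coeff_derivativeFun' (f : PowerSeries ℂ) (n : ℕ) :
    PowerSeries.coeff n f.derivativeFun = PowerSeries.coeff (n + 1) f * (n + 1) :=
  PowerSeries.coeff_derivative f n

lemma lderiv_W (U : PowerSeries ℂ) :
    lderiv (HahnSeries.ofPowerSeries ℤ ℂ U) =
      HahnSeries.ofPowerSeries ℤ ℂ U.derivativeFun := by
  ext n
  rw [lderiv_coeff]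
  rcases lt_or_ge n 0 with hn | hn
  · rw [ofPS_coeff_neg _ _ hn]
    rcases eq_or_ne n (-1 : ℤ) with rfl | h
    · norm_num
    · rw [ofPS_coeff_neg _ _ (by omega), mul_zero]
  · obtain ⟨m, rfl⟩ := Int.eq_ofNat_of_zero_le hn
    rw [show (m : ℤ) + 1 = ((m+1 : ℕ) : ℤ) by push_cast; ring,
      HahnSeries.ofPowerSeries_apply_coeff, HahnSeries.ofPowerSeries_apply_coeff,
      coeff_derivativeFun']
    push_cast
    ring

example : True := trivial

lemma v_eq (U : PowerSeries ℂ) :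
    (miura U) ^ 2 + lderiv (miura U) =
      HahnSeries.single (-2 : ℤ) (2 : ℂ)
        - HahnSeries.single (-1 : ℤ) (1 : ℂ) * HahnSeries.ofPowerSeries ℤ ℂ U
        - HahnSeries.single (-1 : ℤ) (1 : ℂ) * HahnSeries.ofPowerSeries ℤ ℂ U
        + HahnSeries.ofPowerSeries ℤ ℂ (U ^ 2 + U.derivativeFun) := by
  set s : LaurentSeries ℂ := HahnSeries.single (-1 : ℤ) (1 : ℂ) with hs
  set W : LaurentSeries ℂ := HahnSeries.ofPowerSeries ℤ ℂ U with hW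
  have e1 : s * s = HahnSeries.single (-2 : ℤ) (1 : ℂ) := by
    rw [hs, HahnSeries.single_mul_single]; norm_num
  have e3 : HahnSeries.ofPowerSeries ℤ ℂ (U ^ 2 + U.derivativeFun)
      = W * W + HahnSeries.ofPowerSeries ℤ ℂ U.derivativeFun := by
    rw [map_add, map_pow, sq]
  have e4 : HahnSeries.single (-2 : ℤ) (2 : ℂ)
      = HahnSeries.single (-2 : ℤ) (1 : ℂ) + HahnSeries.single (-2 : ℤ) (1 : ℂ) := by
    ext n
    simp only [HahnSeries.coeff_add, HahnSeries.coeff_single]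
    split <;> norm_num
  have e2 : lderiv (miura U) = HahnSeries.single (-2 : ℤ) (1 : ℂ)
      + HahnSeries.ofPowerSeries ℤ ℂ U.derivativeFun := by
    rw [miura, lderiv_add, lderiv_neg, lderiv_s, lderiv_W]
    congr 1
    ext n
    simp [HahnSeries.coeff_single]
  rw [show (miura U)^2 = (-s+W)^2 from rfl, e2]
  linear_combination e1 - e3 - e4

lemma v_coeff (U : PowerSeries ℂ) (n : ℤ) :
    ((miura U) ^ 2 + lderiv (miura U)).coeff n
      = (HahnSeries.single (-2 : ℤ) (2 : ℂ)).coeff n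
        - 2 * (HahnSeries.ofPowerSeries ℤ ℂ U).coeff (n + 1)
        + (HahnSeries.ofPowerSeries ℤ ℂ (U ^ 2 + U.derivativeFun)).coeff n := by
  rw [v_eq]
  simp only [HahnSeries.coeff_add, HahnSeries.coeff_sub, sW_coeff]
  ring

theorem miura_transform_coeffs_and_cubic (U : PowerSeries ℂ) :
    let v : LaurentSeries ℂ := (miura U) ^ 2 + lderiv (miura U)
    (∀ n : ℤ, n < -2 → v.coeff n = 0) ∧
    v.coeff (-2) = 2 ∧
    v.coeff (-1) = -2 * PowerSeries.coeff 0 U ∧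
    (∀ n : ℕ, v.coeff (n : ℤ) =
      PowerSeries.coeff n (U ^ 2 + PowerSeries.derivativeFun U)
        - 2 * PowerSeries.coeff (n + 1) U) ∧
    (1 / 4 : ℂ) * (v.coeff (-1)) ^ 3 - v.coeff 0 * v.coeff (-1) + v.coeff 1 = 0 := by
  intro v
  have h1 : ∀ n : ℤ, n < -2 → v.coeff n = 0 := by
    intro n hn
    rw [v_coeff, HahnSeries.coeff_single_of_ne (by omega),
      ofPS_coeff_neg _ _ (by omega), ofPS_coeff_neg _ _ (by omega)]
    ring
  have h2 : v.coeff (-2) = 2 := by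
    rw [v_coeff, HahnSeries.coeff_single_same, ofPS_coeff_neg _ _ (by omega),
      ofPS_coeff_neg _ _ (by omega)]
    ring
  have h3 : v.coeff (-1) = -2 * PowerSeries.coeff 0 U := by
    rw [v_coeff, show (-1 : ℤ) + 1 = ((0 : ℕ) : ℤ) by norm_num,
      HahnSeries.ofPowerSeries_apply_coeff, HahnSeries.coeff_single_of_ne (by omega),
      ofPS_coeff_neg _ _ (by omega)]
    ring
  have h4 : ∀ n : ℕ, v.coeff (n : ℤ) =
      PowerSeries.coeff n (U ^ 2 + PowerSeries.derivativeFun U)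
        - 2 * PowerSeries.coeff (n + 1) U := by
    intro n
    rw [v_coeff, HahnSeries.coeff_single_of_ne (by omega),
      show (n : ℤ) + 1 = ((n + 1 : ℕ) : ℤ) by push_cast; ring,
      HahnSeries.ofPowerSeries_apply_coeff, HahnSeries.ofPowerSeries_apply_coeff]
    ring
  refine ⟨h1, h2, h3, h4, ?_⟩
  have c0 : PowerSeries.coeff 0 (U ^ 2) = PowerSeries.coeff 0 U * PowerSeries.coeff 0 U := by
    simp [sq, PowerSeries.coeff_mul]
  have c1 : PowerSeries.coeff 1 (U ^ 2) = 2 * (PowerSeries.coeff 0 U * PowerSeries.coeff 1 U) := by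
    simp [sq, PowerSeries.coeff_mul,
      Finset.Nat.sum_antidiagonal_eq_sum_range_succ_mk, Finset.sum_range_succ]
    ring
  have hv0 := h4 0
  have hv1 := h4 1
  rw [show ((0:ℕ):ℤ) = (0:ℤ) by norm_num] at hv0
  rw [show ((1:ℕ):ℤ) = (1:ℤ) by norm_num] at hv1
  rw [h3, hv0, hv1, map_add, map_add, c0, c1,
    coeff_derivativeFun', coeff_derivativeFun']
  push_cast
  ring
end

section
/- Assume the Bethe equations (B1_j) for j = 1,…,m₁ and (B0_j) for j = 1,…,m₀ hold. Then for every z ∈ ℂ with z ≠ 0, z ≠ w¹_j (all j) and z ≠ w⁰_j (all j), one has u(z)² + u′(z) = χ² + ρ₀/z + ℓ(ℓ+1)/z² + Σ_{j=1}^{m₀} [ 2/(z−w⁰_j)² + (k/w⁰_j)/(z−w⁰_j) ], where ρ₀ = 2ℓ·( χ + Σ_{j=1}^{m₁} 1/w¹_j − Σ_{j=1}^{m₀} 1/w⁰_j ) and u′(z) = ℓ/z² − Σ_{j=1}^{m₁} 1/(z−w¹_j)² + Σ_{j=1}^{m₀} 1/(z−w⁰_j)². In particular, u² + u′ has no poles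 at the points w¹_j. -/
open Finset

/-- `u(z) = -χ - ℓ/z + Σ_j 1/(z - w¹_j) - Σ_j 1/(z - w⁰_j)`. -/
noncomputable def uFun (χ ℓ : ℂ) {m₁ m₀ : ℕ} (w1 : Fin m₁ → ℂ) (w0 : Fin m₀ → ℂ)
    (z : ℂ) : ℂ :=
  -χ - ℓ / z + ∑ j, 1 / (z - w1 j) - ∑ j, 1 / (z - w0 j)

/-- `u′(z) = ℓ/z² - Σ_j 1/(z - w¹_j)² + Σ_j 1/(z - w⁰_j)²`. -/
noncomputable def uFun' (ℓ : ℂ) {m₁ m₀ : ℕ} (w1 : Fin m₁ → ℂ) (w0 : Fin m₀ → ℂ)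
    (z : ℂ) : ℂ :=
  ℓ / z ^ 2 - ∑ j, 1 / (z - w1 j) ^ 2 + ∑ j, 1 / (z - w0 j) ^ 2

/-- Swap the two indices in a double sum over off-diagonal pairs. -/
lemma sum_erase_swap {n : ℕ} (f : Fin n → Fin n → ℂ) :
    ∑ j, ∑ s ∈ Finset.univ.erase j, f j s
      = ∑ j, ∑ s ∈ Finset.univ.erase j, f s j := by
  have h : ∀ g : Fin n → Fin n → ℂ,
      ∑ j, ∑ s ∈ Finset.univ.erase j, g j s
        = ∑ j, ∑ s, if j = s then 0 else g j s := by
    intro g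
    refine Finset.sum_congr rfl fun j _ => ?_
    rw [← Finset.add_sum_erase _ (fun s => if j = s then 0 else g j s)
      (Finset.mem_univ j)]
    rw [if_pos rfl, zero_add]
    exact Finset.sum_congr rfl fun s hs => by
      rw [if_neg fun hh => (Finset.ne_of_mem_erase hs) hh.symm]
  have h' : ∀ g : Fin n → Fin n → ℂ,
      ∑ j, ∑ s ∈ Finset.univ.erase j, g j s
        = ∑ j, ∑ s, if s = j then 0 else g j s := by
    intro g
    refine Finset.sum_congr rfl fun j _ => ?_
    rw [← Finset.add_sum_erase _ (fun s => if s = j then 0 else g j s)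
      (Finset.mem_univ j)]
    rw [if_pos rfl, zero_add]
    exact Finset.sum_congr rfl fun s hs => by
      rw [if_neg (Finset.ne_of_mem_erase hs)]
  rw [h f, h' (fun j s => f s j), Finset.sum_comm]

theorem miura_global_of_bethe (χ ℓ k : ℂ) (m₁ m₀ : ℕ)
    (w1 : Fin m₁ → ℂ) (w0 : Fin m₀ → ℂ)
    (hw1 : ∀ j, w1 j ≠ 0) (hw0 : ∀ j, w0 j ≠ 0)
    (hw1inj : Function.Injective w1) (hw0inj : Function.Injective w0)
    (hdisj : ∀ i j, w1 i ≠ w0 j)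
    (hB1 : ∀ j, ℓ / w1 j - ∑ s ∈ univ.erase j, 1 / (w1 j - w1 s)
      + ∑ s, 1 / (w1 j - w0 s) + χ = 0)
    (hB0 : ∀ j, (k / 2 - ℓ) / w0 j + ∑ s, 1 / (w0 j - w1 s)
      - ∑ s ∈ univ.erase j, 1 / (w0 j - w0 s) - χ = 0) :
    ∀ z : ℂ, z ≠ 0 → (∀ j, z ≠ w1 j) → (∀ j, z ≠ w0 j) →
      (uFun χ ℓ w1 w0 z) ^ 2 + uFun' ℓ w1 w0 z
        = χ ^ 2 + (2 * ℓ * (χ + ∑ j, 1 / w1 j - ∑ j, 1 / w0 j)) / z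
          + ℓ * (ℓ + 1) / z ^ 2
          + ∑ j, (2 / (z - w0 j) ^ 2 + (k / w0 j) / (z - w0 j)) := by
  intro z hz hz1 hz0
  have hzw1 : ∀ j, z - w1 j ≠ 0 := fun j => sub_ne_zero.mpr (hz1 j)
  have hzw0 : ∀ j, z - w0 j ≠ 0 := fun j => sub_ne_zero.mpr (hz0 j)
  have hw11 : ∀ j s : Fin m₁, s ≠ j → w1 j - w1 s ≠ 0 := fun j s hjs =>
    sub_ne_zero.mpr (fun h => hjs (hw1inj h).symm)
  have hw00 : ∀ j s : Fin m₀, s ≠ j → w0 j - w0 s ≠ 0 := fun j s hjs =>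
    sub_ne_zero.mpr (fun h => hjs (hw0inj h).symm)
  have hw10 : ∀ (j : Fin m₁) (s : Fin m₀), w1 j - w0 s ≠ 0 := fun j s =>
    sub_ne_zero.mpr (hdisj j s)
  have hw01 : ∀ (j : Fin m₀) (s : Fin m₁), w0 j - w1 s ≠ 0 := fun j s =>
    sub_ne_zero.mpr (fun h => hdisj s j h.symm)
  -- squared sums
  have hA2 : (∑ j, 1 / (z - w1 j)) ^ 2
      = (∑ j, 1 / (z - w1 j) ^ 2)
        + 2 * ∑ j, (1 / (z - w1 j)) * (∑ s ∈ univ.erase j, 1 / (w1 j - w1 s)) := by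
    rw [sq, Fintype.sum_mul_sum]
    have step1 : ∀ j : Fin m₁, ∑ s, (1 / (z - w1 j)) * (1 / (z - w1 s))
        = 1 / (z - w1 j) ^ 2
          + ∑ s ∈ univ.erase j, (1 / (z - w1 j)) * (1 / (z - w1 s)) := by
      intro j
      rw [← Finset.add_sum_erase _ _ (Finset.mem_univ j)]
      congr 1
      rw [div_mul_div_comm, one_mul, ← sq]
    rw [Finset.sum_congr rfl fun j _ => step1 j, Finset.sum_add_distrib]
    congr 1
    have step2 : ∑ j, ∑ s ∈ univ.erase j, (1 / (z - w1 j)) * (1 / (z - w1 s))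
        = ∑ j, ∑ s ∈ univ.erase j,
          ((1 / (z - w1 j)) * (1 / (w1 j - w1 s))
            + (1 / (z - w1 s)) * (1 / (w1 s - w1 j))) := by
      refine Finset.sum_congr rfl fun j _ => Finset.sum_congr rfl fun s hs => ?_
      have h1 := hzw1 j; have h2 := hzw1 s
      have h3 := hw11 j s (Finset.ne_of_mem_erase hs)
      have h4 := hw11 s j fun h => (Finset.ne_of_mem_erase hs) h.symm
      field_simp
      ring
    rw [step2]
    calc ∑ j, ∑ s ∈ univ.erase j,
          ((1 / (z - w1 j)) * (1 / (w1 j - w1 s))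
            + (1 / (z - w1 s)) * (1 / (w1 s - w1 j)))
        = (∑ j, ∑ s ∈ univ.erase j, (1 / (z - w1 j)) * (1 / (w1 j - w1 s)))
          + ∑ j, ∑ s ∈ univ.erase j, (1 / (z - w1 s)) * (1 / (w1 s - w1 j)) := by
          rw [← Finset.sum_add_distrib]
          exact Finset.sum_congr rfl fun j _ => Finset.sum_add_distrib
      _ = (∑ j, ∑ s ∈ univ.erase j, (1 / (z - w1 j)) * (1 / (w1 j - w1 s)))
          + ∑ j, ∑ s ∈ univ.erase j, (1 / (z - w1 j)) * (1 / (w1 j - w1 s)) := by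
          rw [sum_erase_swap (fun j s => (1 / (z - w1 s)) * (1 / (w1 s - w1 j)))]
      _ = 2 * ∑ j, (1 / (z - w1 j)) * (∑ s ∈ univ.erase j, 1 / (w1 j - w1 s)) := by
          rw [two_mul]
          congr 1 <;>
            exact Finset.sum_congr rfl fun j _ => (Finset.mul_sum _ _ _).symm
  have hB2 : (∑ j, 1 / (z - w0 j)) ^ 2
      = (∑ j, 1 / (z - w0 j) ^ 2)
        + 2 * ∑ j, (1 / (z - w0 j)) * (∑ s ∈ univ.erase j, 1 / (w0 j - w0 s)) := by
    rw [sq, Fintype.sum_mul_sum]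
    have step1 : ∀ j : Fin m₀, ∑ s, (1 / (z - w0 j)) * (1 / (z - w0 s))
        = 1 / (z - w0 j) ^ 2
          + ∑ s ∈ univ.erase j, (1 / (z - w0 j)) * (1 / (z - w0 s)) := by
      intro j
      rw [← Finset.add_sum_erase _ _ (Finset.mem_univ j)]
      congr 1
      rw [div_mul_div_comm, one_mul, ← sq]
    rw [Finset.sum_congr rfl fun j _ => step1 j, Finset.sum_add_distrib]
    congr 1
    have step2 : ∑ j, ∑ s ∈ univ.erase j, (1 / (z - w0 j)) * (1 / (z - w0 s))
        = ∑ j, ∑ s ∈ univ.erase j,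
          ((1 / (z - w0 j)) * (1 / (w0 j - w0 s))
            + (1 / (z - w0 s)) * (1 / (w0 s - w0 j))) := by
      refine Finset.sum_congr rfl fun j _ => Finset.sum_congr rfl fun s hs => ?_
      have h1 := hzw0 j; have h2 := hzw0 s
      have h3 := hw00 j s (Finset.ne_of_mem_erase hs)
      have h4 := hw00 s j fun h => (Finset.ne_of_mem_erase hs) h.symm
      field_simp
      ring
    rw [step2]
    calc ∑ j, ∑ s ∈ univ.erase j,
          ((1 / (z - w0 j)) * (1 / (w0 j - w0 s))
            + (1 / (z - w0 s)) * (1 / (w0 s - w0 j)))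
        = (∑ j, ∑ s ∈ univ.erase j, (1 / (z - w0 j)) * (1 / (w0 j - w0 s)))
          + ∑ j, ∑ s ∈ univ.erase j, (1 / (z - w0 s)) * (1 / (w0 s - w0 j)) := by
          rw [← Finset.sum_add_distrib]
          exact Finset.sum_congr rfl fun j _ => Finset.sum_add_distrib
      _ = (∑ j, ∑ s ∈ univ.erase j, (1 / (z - w0 j)) * (1 / (w0 j - w0 s)))
          + ∑ j, ∑ s ∈ univ.erase j, (1 / (z - w0 j)) * (1 / (w0 j - w0 s)) := by
          rw [sum_erase_swap (fun j s => (1 / (z - w0 s)) * (1 / (w0 s - w0 j)))]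
      _ = 2 * ∑ j, (1 / (z - w0 j)) * (∑ s ∈ univ.erase j, 1 / (w0 j - w0 s)) := by
          rw [two_mul]
          congr 1 <;>
            exact Finset.sum_congr rfl fun j _ => (Finset.mul_sum _ _ _).symm
  -- cross term
  have hAB : (∑ j, 1 / (z - w1 j)) * (∑ j, 1 / (z - w0 j))
      = (∑ j, (1 / (z - w1 j)) * (∑ s, 1 / (w1 j - w0 s)))
        + (∑ j, (1 / (z - w0 j)) * (∑ s, 1 / (w0 j - w1 s))) := by
    rw [Fintype.sum_mul_sum]
    have step : ∀ (j : Fin m₁) (s : Fin m₀),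
        (1 / (z - w1 j)) * (1 / (z - w0 s))
          = (1 / (z - w1 j)) * (1 / (w1 j - w0 s))
            + (1 / (z - w0 s)) * (1 / (w0 s - w1 j)) := by
      intro j s
      have h1 := hzw1 j; have h2 := hzw0 s
      have h3 := hw10 j s; have h4 := hw01 s j
      field_simp
      ring
    rw [Finset.sum_congr rfl fun j _ => Finset.sum_congr rfl fun s _ => step j s]
    rw [Finset.sum_congr rfl
      (fun (j : Fin m₁) (_ : j ∈ univ) => Finset.sum_add_distrib
        (s := (univ : Finset (Fin m₀)))), Finset.sum_add_distrib]
    congr 1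
    · exact Finset.sum_congr rfl fun j _ => (Finset.mul_sum _ _ _).symm
    · rw [Finset.sum_comm]
      exact Finset.sum_congr rfl fun j _ => (Finset.mul_sum _ _ _).symm
  -- dividing sums by z
  have hAz : (∑ j, 1 / (z - w1 j)) / z
      = (∑ j, (1 / (z - w1 j)) * (1 / w1 j)) - (∑ j, 1 / w1 j) / z := by
    rw [Finset.sum_div, Finset.sum_div, ← Finset.sum_sub_distrib]
    refine Finset.sum_congr rfl fun j _ => ?_
    have h1 := hzw1 j; have h2 := hw1 j
    field_simp
    ring
  have hBz : (∑ j, 1 / (z - w0 j)) / z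
      = (∑ j, (1 / (z - w0 j)) * (1 / w0 j)) - (∑ j, 1 / w0 j) / z := by
    rw [Finset.sum_div, Finset.sum_div, ← Finset.sum_sub_distrib]
    refine Finset.sum_congr rfl fun j _ => ?_
    have h1 := hzw0 j; have h2 := hw0 j
    field_simp
    ring
  -- Bethe equations, summed
  have hBe1 : ∑ j, (1 / (z - w1 j)) * (∑ s ∈ univ.erase j, 1 / (w1 j - w1 s))
      = χ * (∑ j, 1 / (z - w1 j)) + ℓ * (∑ j, (1 / (z - w1 j)) * (1 / w1 j))
        + (∑ j, (1 / (z - w1 j)) * (∑ s, 1 / (w1 j - w0 s))) := by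
    rw [Finset.mul_sum, Finset.mul_sum, ← Finset.sum_add_distrib,
      ← Finset.sum_add_distrib]
    refine Finset.sum_congr rfl fun j _ => ?_
    linear_combination (-(1 / (z - w1 j))) * hB1 j
  have hBe0 : 2 * (∑ j, (1 / (z - w0 j)) * (∑ s ∈ univ.erase j, 1 / (w0 j - w0 s)))
      + 2 * χ * (∑ j, 1 / (z - w0 j))
      + 2 * ℓ * (∑ j, (1 / (z - w0 j)) * (1 / w0 j))
      - 2 * (∑ j, (1 / (z - w0 j)) * (∑ s, 1 / (w0 j - w1 s)))
      = ∑ j, (k / w0 j) * (1 / (z - w0 j)) := by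
    rw [Finset.mul_sum, Finset.mul_sum, Finset.mul_sum, Finset.mul_sum,
      ← Finset.sum_add_distrib, ← Finset.sum_add_distrib, ← Finset.sum_sub_distrib]
    refine Finset.sum_congr rfl fun j _ => ?_
    linear_combination (-2 * (1 / (z - w0 j))) * hB0 j
  have hfin : ∑ j, (2 / (z - w0 j) ^ 2 + (k / w0 j) / (z - w0 j))
      = 2 * (∑ j, 1 / (z - w0 j) ^ 2) + ∑ j, (k / w0 j) * (1 / (z - w0 j)) := by
    rw [Finset.mul_sum, ← Finset.sum_add_distrib]
    refine Finset.sum_congr rfl fun j _ => ?_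
    ring
  unfold uFun uFun'
  linear_combination hA2 + hB2 - 2 * hAB - 2 * ℓ * hAz + 2 * ℓ * hBz
    + 2 * hBe1 + hBe0 - hfin
end

section
/- Assume the Bethe equations (B1_j) for j = 1,…,m₁ and (B0_j) for j = 1,…,m₀ hold, and let v(z) = u(z)² + u′(z). Fix j ∈ {1,…,m₀} and let v_{j,n} (n ≥ −1) be the coefficients of the Laurent expansion of v at w⁰_j, i.e., v(z) = 2/(z−w⁰_j)² + Σ_{n≥−1} v_{j,n}(z−w⁰_j)^n near w⁰_j. Then v_{j,−1} = k/w⁰_j, and the 'no-monodromy' cubic equation holds: (1/4)·(k/w⁰_j)³ − (k/w⁰_j)·v_{j,0} + v_{j,1} = 0. -/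
open Finset Topology

open Filter in
/-- derivative of `z ↦ c / φ z`. -/
lemma hasDerivAt_cdiv {φ : ℂ → ℂ} {φ' a c : ℂ} (hφ : HasDerivAt φ φ' a) (h0 : φ a ≠ 0) :
    HasDerivAt (fun z => c / φ z) (-(c * φ') / φ a ^ 2) a := by
  have := (hasDerivAt_const a c).fun_div hφ h0
  convert! this using 1
  ring

open Filter in
set_option maxHeartbeats 1000000 in
/-- If the Bethe equations hold, then in the Laurent expansion
`v(z) = 2/(z-w⁰ⱼ)² + Σ_{n ≥ -1} v_{j,n}(z-w⁰ⱼ)ⁿ` of `v = u² + u′` at `w⁰ⱼ` one has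
`v_{j,-1} = k/w⁰ⱼ` and `(1/4)(k/w⁰ⱼ)³ - (k/w⁰ⱼ)·v_{j,0} + v_{j,1} = 0`.
The Laurent expansion is encoded by a residue `r = v_{j,-1}` and an analytic function `G`
whose Taylor coefficients at `w⁰ⱼ` are the `v_{j,n}`, `n ≥ 0`; in particular
`v_{j,0} = G(w⁰ⱼ)` and `v_{j,1} = G′(w⁰ⱼ)`. -/
theorem no_monodromy_cubic_of_bethe (χ ℓ k : ℂ) (m₁ m₀ : ℕ)
    (w1 : Fin m₁ → ℂ) (w0 : Fin m₀ → ℂ)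
    (hw1 : ∀ j, w1 j ≠ 0) (hw0 : ∀ j, w0 j ≠ 0)
    (hw1inj : Function.Injective w1) (hw0inj : Function.Injective w0)
    (hdisj : ∀ i j, w1 i ≠ w0 j)
    (hB1 : ∀ j, ℓ / w1 j - ∑ s ∈ univ.erase j, 1 / (w1 j - w1 s)
      + ∑ s, 1 / (w1 j - w0 s) + χ = 0)
    (hB0 : ∀ j, (k / 2 - ℓ) / w0 j + ∑ s, 1 / (w0 j - w1 s)
      - ∑ s ∈ univ.erase j, 1 / (w0 j - w0 s) - χ = 0)
    (j : Fin m₀) (r : ℂ) (G : ℂ → ℂ) (hG : AnalyticAt ℂ G (w0 j))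
    (hexp : ∀ᶠ z in 𝓝[≠] (w0 j),
      (uFun χ ℓ w1 w0 z) ^ 2 + uFun' ℓ w1 w0 z
        = 2 / (z - w0 j) ^ 2 + r / (z - w0 j) + G z) :
    r = k / w0 j ∧
      (1 / 4 : ℂ) * (k / w0 j) ^ 3 - (k / w0 j) * G (w0 j) + deriv G (w0 j) = 0 := by
  set a : ℂ := w0 j with ha_def
  have ha0 : a ≠ 0 := hw0 j
  have haw1 : ∀ s, a - w1 s ≠ 0 := fun s => sub_ne_zero.mpr fun h => hdisj s j (h.symm)
  have haw0 : ∀ s ∈ univ.erase j, a - w0 s ≠ 0 := by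
    intro s hs
    exact sub_ne_zero.mpr fun h => (Finset.mem_erase.mp hs).1 (hw0inj h.symm)
  -- the regular parts
  set h : ℂ → ℂ := fun z => -χ - ℓ / z + ∑ s, 1 / (z - w1 s) - ∑ s ∈ univ.erase j, 1 / (z - w0 s) with hh
  set h2 : ℂ → ℂ := fun z => ℓ / z ^ 2 - ∑ s, 1 / (z - w1 s) ^ 2 + ∑ s ∈ univ.erase j, 1 / (z - w0 s) ^ 2 with hh2
  set g : ℂ → ℂ := fun z => ℓ / (z * a) - ∑ s, 1 / ((z - w1 s) * (a - w1 s)) + ∑ s ∈ univ.erase j, 1 / ((z - w0 s) * (a - w0 s)) with hg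
  -- splitting of uFun, uFun'
  have hu : ∀ z : ℂ, uFun χ ℓ w1 w0 z = h z - 1 / (z - a) := by
    intro z
    simp only [uFun, hh]
    rw [← Finset.sum_erase_add _ (fun s => 1 / (z - w0 s)) (mem_univ j)]
    ring
  have hu' : ∀ z : ℂ, uFun' ℓ w1 w0 z = h2 z + 1 / (z - a) ^ 2 := by
    intro z
    simp only [uFun', hh2]
    rw [← Finset.sum_erase_add _ (fun s => 1 / (z - w0 s) ^ 2) (mem_univ j)]
    ring
  -- derivatives
  have hd_h : HasDerivAt h (h2 a) a := by
    have hc : HasDerivAt (fun z : ℂ => -χ - ℓ / z) (ℓ / a ^ 2) a := by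
      have := (hasDerivAt_const a (-χ)).fun_sub (hasDerivAt_cdiv (c := ℓ) (hasDerivAt_id a) ha0)
      convert! this using 1
      simp only [id_eq]
      field_simp
      ring
    have hs1 : HasDerivAt (fun z : ℂ => ∑ s, 1 / (z - w1 s)) (∑ s, -(1 / (a - w1 s) ^ 2)) a := by
      apply HasDerivAt.fun_sum
      intro i _
      have := hasDerivAt_cdiv (c := 1) ((hasDerivAt_id a).sub_const (w1 i)) (haw1 i)
      convert! this using 1
      try simp only [id_eq]
      ring
    have hs0 : HasDerivAt (fun z : ℂ => ∑ s ∈ univ.erase j, 1 / (z - w0 s))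
        (∑ s ∈ univ.erase j, -(1 / (a - w0 s) ^ 2)) a := by
      apply HasDerivAt.fun_sum
      intro i hi
      have := hasDerivAt_cdiv (c := 1) ((hasDerivAt_id a).sub_const (w0 i)) (haw0 i hi)
      convert! this using 1
      try simp only [id_eq]
      ring
    have := (hc.fun_add hs1).fun_sub hs0
    convert! this using 1
    simp only [hh2, Finset.sum_neg_distrib]
    ring
  have hd_h2 : HasDerivAt h2
      (2 * (-(ℓ / a ^ 3) + ∑ s, 1 / (a - w1 s) ^ 3 - ∑ s ∈ univ.erase j, 1 / (a - w0 s) ^ 3)) a := by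
    have hc : HasDerivAt (fun z : ℂ => ℓ / z ^ 2) (-(2 * ℓ / a ^ 3)) a := by
      have := hasDerivAt_cdiv (c := ℓ) (hasDerivAt_pow 2 a) (pow_ne_zero 2 ha0)
      convert! this using 1
      try simp only [id_eq]
      field_simp
      ring
    have hs1 : HasDerivAt (fun z : ℂ => ∑ s, 1 / (z - w1 s) ^ 2)
        (∑ s, -(2 / (a - w1 s) ^ 3)) a := by
      apply HasDerivAt.fun_sum
      intro i _
      have hp : HasDerivAt (fun z : ℂ => (z - w1 i) ^ 2) (2 * (a - w1 i)) a := by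
        have := ((hasDerivAt_id a).sub_const (w1 i)).fun_pow 2
        convert! this using 1
        try simp only [id_eq]
        ring
      have := hasDerivAt_cdiv (c := 1) hp (pow_ne_zero 2 (haw1 i))
      convert! this using 1
      rw [neg_div, neg_inj, div_eq_div_iff (pow_ne_zero 3 (haw1 i))
        (pow_ne_zero 2 (pow_ne_zero 2 (haw1 i)))]
      ring
    have hs0 : HasDerivAt (fun z : ℂ => ∑ s ∈ univ.erase j, 1 / (z - w0 s) ^ 2)
        (∑ s ∈ univ.erase j, -(2 / (a - w0 s) ^ 3)) a := by
      apply HasDerivAt.fun_sum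
      intro i hi
      have hp : HasDerivAt (fun z : ℂ => (z - w0 i) ^ 2) (2 * (a - w0 i)) a := by
        have := ((hasDerivAt_id a).sub_const (w0 i)).fun_pow 2
        convert! this using 1
        try simp only [id_eq]
        ring
      have := hasDerivAt_cdiv (c := 1) hp (pow_ne_zero 2 (haw0 i hi))
      convert! this using 1
      rw [neg_div, neg_inj, div_eq_div_iff (pow_ne_zero 3 (haw0 i hi))
        (pow_ne_zero 2 (pow_ne_zero 2 (haw0 i hi)))]
      ring
    have := (hc.fun_sub hs1).fun_add hs0
    convert! this using 1
    simp only [mul_add, mul_sub, mul_neg, Finset.mul_sum, mul_one_div, Finset.sum_neg_distrib]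
    ring
  have hd_g : HasDerivAt g
      (-(ℓ / a ^ 3) + ∑ s, 1 / (a - w1 s) ^ 3 - ∑ s ∈ univ.erase j, 1 / (a - w0 s) ^ 3) a := by
    have hc : HasDerivAt (fun z : ℂ => ℓ / (z * a)) (-(ℓ / a ^ 3)) a := by
      have := hasDerivAt_cdiv (c := ℓ) ((hasDerivAt_id a).mul_const a) (mul_ne_zero ha0 ha0)
      convert! this using 1
      try simp only [id_eq]
      field_simp
    have hs1 : HasDerivAt (fun z : ℂ => ∑ s, 1 / ((z - w1 s) * (a - w1 s)))
        (∑ s, -(1 / (a - w1 s) ^ 3)) a := by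
      apply HasDerivAt.fun_sum
      intro i _
      have := hasDerivAt_cdiv (c := 1)
        (((hasDerivAt_id a).sub_const (w1 i)).mul_const (a - w1 i))
        (mul_ne_zero (haw1 i) (haw1 i))
      convert! this using 1
      simp only [id_eq]
      rw [neg_div, neg_inj, div_eq_div_iff (pow_ne_zero 3 (haw1 i))
        (pow_ne_zero 2 (mul_ne_zero (haw1 i) (haw1 i)))]
      ring
    have hs0 : HasDerivAt (fun z : ℂ => ∑ s ∈ univ.erase j, 1 / ((z - w0 s) * (a - w0 s)))
        (∑ s ∈ univ.erase j, -(1 / (a - w0 s) ^ 3)) a := by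
      apply HasDerivAt.fun_sum
      intro i hi
      have := hasDerivAt_cdiv (c := 1)
        (((hasDerivAt_id a).sub_const (w0 i)).mul_const (a - w0 i))
        (mul_ne_zero (haw0 i hi) (haw0 i hi))
      convert! this using 1
      simp only [id_eq]
      rw [neg_div, neg_inj, div_eq_div_iff (pow_ne_zero 3 (haw0 i hi))
        (pow_ne_zero 2 (mul_ne_zero (haw0 i hi) (haw0 i hi)))]
      ring
    have := (hc.fun_sub hs1).fun_add hs0
    convert! this using 1
    simp only [Finset.sum_neg_distrib]
    ring
  -- avoid finitely many bad points
  have hS : ∀ᶠ z in 𝓝[≠] a, (z ≠ 0 ∧ (∀ s, z ≠ w1 s) ∧ ∀ s ∈ univ.erase j, z ≠ w0 s) ∧ z ≠ a := by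
    classical
    set T : Finset ℂ := (insert 0 (Finset.image w1 univ ∪ Finset.image w0 (univ.erase j)))
    have haT : a ∉ T := by
      simp only [T, Finset.mem_insert, Finset.mem_union, Finset.mem_image, not_or]
      refine ⟨ha0, ?_, ?_⟩
      · rintro ⟨s, -, hs⟩
        exact hdisj s j hs
      · rintro ⟨s, hs, hsa⟩
        exact (Finset.mem_erase.mp hs).1 (hw0inj hsa)
    have hop : ∀ᶠ z in 𝓝 a, z ∉ T :=
      ((T.finite_toSet.isClosed).isOpen_compl).eventually_mem haT
    have h1 : ∀ᶠ z in 𝓝[≠] a, z ∉ T := eventually_nhdsWithin_of_eventually_nhds hop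
    filter_upwards [h1, self_mem_nhdsWithin] with z hzT hza
    refine ⟨⟨?_, ?_, ?_⟩, hza⟩
    · intro h; exact hzT (by simp [T, h])
    · intro s h; exact hzT (by simp [T]; right; left; exact ⟨s, h.symm⟩)
    · intro s hs h; exact hzT (by simp [T]; right; right; exact ⟨s, (Finset.mem_erase.mp hs).1, h.symm⟩)
  -- the key eventual identity
  have hkey : ∀ᶠ z in 𝓝[≠] a, (z - a) * G z + r = (z - a) * (h z ^ 2 + h2 z) - 2 * h z := by
    filter_upwards [hexp, hS] with z hv hz
    obtain ⟨⟨hz0, hzw1, hzw0⟩, hza⟩ := hz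
    rw [hu z, hu' z] at hv
    have hza' : z - a ≠ 0 := sub_ne_zero.mpr hza
    have hq : (z - a) * (1 / (z - a)) = 1 := by field_simp
    have hq3 : ((1 : ℂ) / (z - a)) ^ 2 = 1 / (z - a) ^ 2 := by rw [div_pow, one_pow]
    linear_combination (-(z - a)) * hv + (-(r + 2 * h z)) * hq + (z - a) * hq3
  -- continuity facts
  have hGc : ContinuousAt G a := hG.continuousAt
  have hhc : ContinuousAt h a := hd_h.continuousAt
  have hh2c : ContinuousAt h2 a := hd_h2.continuousAt
  -- the residue
  have hr : r = -2 * h a := by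
    have t1 : Filter.Tendsto (fun z => (z - a) * G z + r) (𝓝[≠] a) (𝓝 ((a - a) * G a + r)) :=
      (((continuousAt_id.sub continuousAt_const).mul hGc).add continuousAt_const).continuousWithinAt
    have t2 : Filter.Tendsto (fun z => (z - a) * (h z ^ 2 + h2 z) - 2 * h z) (𝓝[≠] a)
        (𝓝 ((a - a) * (h a ^ 2 + h2 a) - 2 * h a)) :=
      (((continuousAt_id.sub continuousAt_const).mul ((hhc.pow 2).add hh2c)).sub
        (continuousAt_const.mul hhc)).continuousWithinAt
    have heq := tendsto_nhds_unique (t1.congr' hkey) t2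
    simp only [sub_self, zero_mul, zero_add, zero_sub] at heq
    linear_combination heq

  -- factorization h z - h a = (z - a) * g z
  have hfac : ∀ z : ℂ, z ≠ 0 → (∀ s, z ≠ w1 s) → (∀ s ∈ univ.erase j, z ≠ w0 s) →
      h z - h a = (z - a) * g z := by
    intro z hz0 hzw1 hzw0
    have E1 : (∑ s, 1 / (z - w1 s)) - ∑ s, 1 / (a - w1 s)
        = (z - a) * -∑ s, 1 / ((z - w1 s) * (a - w1 s)) := by
      rw [← Finset.sum_sub_distrib, mul_neg, Finset.mul_sum, ← Finset.sum_neg_distrib]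
      refine Finset.sum_congr rfl fun s _ => ?_
      have h1 : z - w1 s ≠ 0 := sub_ne_zero.mpr (hzw1 s)
      have h2 : a - w1 s ≠ 0 := haw1 s
      field_simp
      try ring
    have E0 : (∑ s ∈ univ.erase j, 1 / (z - w0 s)) - ∑ s ∈ univ.erase j, 1 / (a - w0 s)
        = (z - a) * -∑ s ∈ univ.erase j, 1 / ((z - w0 s) * (a - w0 s)) := by
      rw [← Finset.sum_sub_distrib, mul_neg, Finset.mul_sum, ← Finset.sum_neg_distrib]
      refine Finset.sum_congr rfl fun s hs => ?_
      have h1 : z - w0 s ≠ 0 := sub_ne_zero.mpr (hzw0 s hs)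
      have h2 : a - w0 s ≠ 0 := haw0 s hs
      field_simp
      try ring
    have EL : (-(ℓ / z)) - (-(ℓ / a)) = (z - a) * (ℓ / (z * a)) := by
      field_simp
      ring
    simp only [hh, hg]
    linear_combination E1 - E0 + EL
  -- eventual equality of G with F
  set F : ℂ → ℂ := fun z => h z ^ 2 + h2 z - 2 * g z with hF
  have hGF : ∀ᶠ z in 𝓝[≠] a, G z = F z := by
    filter_upwards [hkey, hS] with z hk hz
    obtain ⟨⟨hz0, hzw1, hzw0⟩, hza⟩ := hz
    have hza' : z - a ≠ 0 := sub_ne_zero.mpr hza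
    have hf := hfac z hz0 hzw1 hzw0
    rw [hr] at hk
    have : (z - a) * G z = (z - a) * F z := by
      simp only [hF]
      linear_combination hk - 2 * hf
    exact mul_left_cancel₀ hza' this
  have hFd : HasDerivAt F (2 * h a * h2 a) a := by
    have := ((hd_h.fun_pow 2).fun_add hd_h2).fun_sub (hd_g.const_mul 2)
    convert! this using 1
    ring
  have hFc : ContinuousAt F a := hFd.continuousAt
  have hGa : G a = F a :=
    tendsto_nhds_unique (Tendsto.congr' hGF hGc.continuousWithinAt) hFc.continuousWithinAt
  have hGFn : G =ᶠ[𝓝 a] F := by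
    have := eventually_nhdsWithin_iff.mp hGF
    filter_upwards [this] with z hz
    by_cases h : z = a
    · subst h; exact hGa
    · exact hz h
  have hdG : deriv G a = 2 * h a * h2 a := by
    rw [hGFn.deriv_eq, hFd.deriv]
  -- value of h at a from the Bethe equation
  have hA : h a = -(k / 2 / a) := by
    have hb := hB0 j
    rw [← ha_def] at hb
    simp only [hh]
    linear_combination hb
  have hga : g a = h2 a := by
    simp only [hg, hh2, ← pow_two]
  have hka : k / a = -2 * h a := by
    rw [hA]; field_simp
  constructor
  · rw [hr, hA]; field_simp
  · rw [hGa, hdG, hka]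
    simp only [hF, hga]
    ring
end

section
/- Let v(z) = u(z)² + u′(z), a rational function with possible poles only at 0, the w¹_j and the w⁰_j. Then: (a) for each j ∈ {1,…,m₁}, the function v extends analytically to a neighborhood of w¹_j (equivalently, v has no pole at w¹_j) if and only if the Bethe equation (B1_j) holds; (b) for each j ∈ {1,…,m₀}, the function z ↦ v(z) − 2/(z−w⁰_j)² − (k/w⁰_j)/(z−w⁰_j) extends analytically to a neighborhood of w⁰_j if and only if the Bethe equation (B0_j) holds. -/
open Finset Topology Filter

/-- The "regular part" of `u` after removing one simple-pole term. -/
noncomputable def Rfn (χ ℓ : ℂ) {m₁ m₀ : ℕ} (w1 : Fin m₁ → ℂ) (w0 : Fin m₀ → ℂ)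
    (s1 : Finset (Fin m₁)) (s0 : Finset (Fin m₀)) (z : ℂ) : ℂ :=
  -χ - ℓ / z + ∑ s ∈ s1, 1 / (z - w1 s) - ∑ s ∈ s0, 1 / (z - w0 s)

/-- Difference quotient of `Rfn` relative to a base point `p`. -/
noncomputable def Dfn (ℓ p : ℂ) {m₁ m₀ : ℕ} (w1 : Fin m₁ → ℂ) (w0 : Fin m₀ → ℂ)
    (s1 : Finset (Fin m₁)) (s0 : Finset (Fin m₀)) (z : ℂ) : ℂ :=
  ℓ / (z * p) + ∑ s ∈ s1, (-(1 / ((z - w1 s) * (p - w1 s))))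
    - ∑ s ∈ s0, (-(1 / ((z - w0 s) * (p - w0 s))))

/-- The "regular part" of `u′` after removing one double-pole term. -/
noncomputable def Tfn (ℓ : ℂ) {m₁ m₀ : ℕ} (w1 : Fin m₁ → ℂ) (w0 : Fin m₀ → ℂ)
    (s1 : Finset (Fin m₁)) (s0 : Finset (Fin m₀)) (z : ℂ) : ℂ :=
  ℓ / z ^ 2 - ∑ s ∈ s1, 1 / (z - w1 s) ^ 2 + ∑ s ∈ s0, 1 / (z - w0 s) ^ 2

lemma frac_split {z p a : ℂ} (hz : z ≠ a) (hp : p ≠ a) :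
    (1 : ℂ) / (z - a) = 1 / (p - a) + (z - p) * (-(1 / ((z - a) * (p - a)))) := by
  have h1 : z - a ≠ 0 := sub_ne_zero.mpr hz
  have h2 : p - a ≠ 0 := sub_ne_zero.mpr hp
  field_simp
  ring

lemma oneDiv_analytic {a p : ℂ} (h : p ≠ a) : AnalyticAt ℂ (fun z => 1 / (z - a)) p :=
  analyticAt_const.div (analyticAt_id.sub analyticAt_const) (sub_ne_zero.mpr h)

lemma Rfn_analytic (χ ℓ : ℂ) {m₁ m₀ : ℕ} (w1 : Fin m₁ → ℂ) (w0 : Fin m₀ → ℂ)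
    (s1 : Finset (Fin m₁)) (s0 : Finset (Fin m₀)) (p : ℂ) (hp0 : p ≠ 0)
    (h1 : ∀ s ∈ s1, p ≠ w1 s) (h0 : ∀ s ∈ s0, p ≠ w0 s) :
    AnalyticAt ℂ (Rfn χ ℓ w1 w0 s1 s0) p := by
  unfold Rfn
  exact ((analyticAt_const.fun_sub (analyticAt_const.fun_div analyticAt_id hp0)).fun_add
      (Finset.analyticAt_fun_sum _ fun s hs => oneDiv_analytic (h1 s hs))).fun_sub
    (Finset.analyticAt_fun_sum _ fun s hs => oneDiv_analytic (h0 s hs))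

lemma Dfn_analytic (ℓ : ℂ) {m₁ m₀ : ℕ} (w1 : Fin m₁ → ℂ) (w0 : Fin m₀ → ℂ)
    (s1 : Finset (Fin m₁)) (s0 : Finset (Fin m₀)) (p : ℂ) (hp0 : p ≠ 0)
    (h1 : ∀ s ∈ s1, p ≠ w1 s) (h0 : ∀ s ∈ s0, p ≠ w0 s) :
    AnalyticAt ℂ (Dfn ℓ p w1 w0 s1 s0) p := by
  unfold Dfn
  have key : ∀ a : ℂ, p ≠ a → AnalyticAt ℂ (fun z => -(1 / ((z - a) * (p - a)))) p := by
    intro a ha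
    have hne : (p - a) * (p - a) ≠ 0 :=
      mul_ne_zero (sub_ne_zero.mpr ha) (sub_ne_zero.mpr ha)
    exact (analyticAt_const.div ((analyticAt_id.sub analyticAt_const).mul analyticAt_const)
      hne).neg
  exact ((analyticAt_const.fun_div (analyticAt_id.fun_mul analyticAt_const)
      (mul_ne_zero hp0 hp0)).fun_add
      (Finset.analyticAt_fun_sum _ fun s hs => key _ (h1 s hs))).fun_sub
    (Finset.analyticAt_fun_sum _ fun s hs => key _ (h0 s hs))

lemma Tfn_analytic (ℓ : ℂ) {m₁ m₀ : ℕ} (w1 : Fin m₁ → ℂ) (w0 : Fin m₀ → ℂ)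
    (s1 : Finset (Fin m₁)) (s0 : Finset (Fin m₀)) (p : ℂ) (hp0 : p ≠ 0)
    (h1 : ∀ s ∈ s1, p ≠ w1 s) (h0 : ∀ s ∈ s0, p ≠ w0 s) :
    AnalyticAt ℂ (Tfn ℓ w1 w0 s1 s0) p := by
  unfold Tfn
  have key : ∀ a : ℂ, p ≠ a → AnalyticAt ℂ (fun z => 1 / (z - a) ^ 2) p := by
    intro a ha
    exact analyticAt_const.div ((analyticAt_id.sub analyticAt_const).pow 2)
      (pow_ne_zero 2 (sub_ne_zero.mpr ha))
  exact ((analyticAt_const.fun_div (analyticAt_id.fun_pow 2) (pow_ne_zero 2 hp0)).fun_sub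
      (Finset.analyticAt_fun_sum _ fun s hs => key _ (h1 s hs))).fun_add
    (Finset.analyticAt_fun_sum _ fun s hs => key _ (h0 s hs))

lemma Rfn_shift (χ ℓ : ℂ) {m₁ m₀ : ℕ} (w1 : Fin m₁ → ℂ) (w0 : Fin m₀ → ℂ)
    (s1 : Finset (Fin m₁)) (s0 : Finset (Fin m₀)) (p z : ℂ)
    (hz0 : z ≠ 0) (hp0 : p ≠ 0)
    (hz1 : ∀ s ∈ s1, z ≠ w1 s) (hp1 : ∀ s ∈ s1, p ≠ w1 s)
    (hz0' : ∀ s ∈ s0, z ≠ w0 s) (hp0' : ∀ s ∈ s0, p ≠ w0 s) :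
    Rfn χ ℓ w1 w0 s1 s0 z = Rfn χ ℓ w1 w0 s1 s0 p + (z - p) * Dfn ℓ p w1 w0 s1 s0 z := by
  unfold Rfn Dfn
  rw [show (∑ s ∈ s1, 1 / (z - w1 s))
      = ∑ s ∈ s1, (1 / (p - w1 s) + (z - p) * (-(1 / ((z - w1 s) * (p - w1 s))))) from
    Finset.sum_congr rfl fun s hs => frac_split (hz1 s hs) (hp1 s hs)]
  rw [show (∑ s ∈ s0, 1 / (z - w0 s))
      = ∑ s ∈ s0, (1 / (p - w0 s) + (z - p) * (-(1 / ((z - w0 s) * (p - w0 s))))) from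
    Finset.sum_congr rfl fun s hs => frac_split (hz0' s hs) (hp0' s hs)]
  rw [Finset.sum_add_distrib, Finset.sum_add_distrib, ← Finset.mul_sum, ← Finset.mul_sum]
  have hl : ℓ / z = ℓ / p - (z - p) * (ℓ / (z * p)) := by
    field_simp
    ring
  rw [hl]
  ring

/-- Key removable-singularity criterion: a function which equals
`c/(z-p) + H z` near `p` (with `H` analytic) extends analytically iff `c = 0`. -/
lemma pole_coeff_iff (p c : ℂ) (H : ℂ → ℂ) (hHa : AnalyticAt ℂ H p) :
    (∃ G : ℂ → ℂ, AnalyticAt ℂ G p ∧ ∀ᶠ z in 𝓝[≠] p, G z = c / (z - p) + H z) ↔ c = 0 := by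
  constructor
  · rintro ⟨G, hG, hGe⟩
    have hc : ContinuousAt (fun z => (z - p) * (G z - H z)) p :=
      (continuousAt_id.sub continuousAt_const).mul (hG.continuousAt.sub hHa.continuousAt)
    have h1 : Tendsto (fun z => (z - p) * (G z - H z)) (𝓝[≠] p) (𝓝 0) := by
      have := (hc.continuousWithinAt (s := {p}ᶜ)).tendsto
      simpa using this
    have h2 : Tendsto (fun z => (z - p) * (G z - H z)) (𝓝[≠] p) (𝓝 c) := by
      refine Tendsto.congr' ?_ tendsto_const_nhds
      filter_upwards [hGe, self_mem_nhdsWithin] with z hz hz'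
      have hzp : z - p ≠ 0 := sub_ne_zero.mpr hz'
      rw [hz]
      field_simp
      ring
    exact (tendsto_nhds_unique h1 h2).symm
  · rintro rfl
    exact ⟨H, hHa, by filter_upwards with z; simp⟩

lemma combine1 (zp Az Ap Dz Tz vz v'z : ℂ) (hzp : zp ≠ 0)
    (e1 : vz = 1 / zp + Az) (e2 : v'z = -(1 / zp ^ 2) + Tz) (e3 : Az = Ap + zp * Dz) :
    vz ^ 2 + v'z = (2 * Ap) / zp + (2 * Dz + Az ^ 2 + Tz) := by
  rw [e1, e2]
  linear_combination (2 / zp) * e3 + 2 * Dz * (mul_inv_cancel₀ hzp)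

lemma combine0 (zp q Bz Bp Dz Tz vz v'z : ℂ) (hzp : zp ≠ 0)
    (e1 : vz = -(1 / zp) + Bz) (e2 : v'z = 1 / zp ^ 2 + Tz) (e3 : Bz = Bp + zp * Dz) :
    vz ^ 2 + v'z - 2 / zp ^ 2 - q / zp
      = (-(2 * Bp) - q) / zp + (-(2 * Dz) + Bz ^ 2 + Tz) := by
  rw [e1, e2]
  linear_combination (-(2 / zp)) * e3 + (-(2 * Dz)) * (mul_inv_cancel₀ hzp)

/-- `v = u² + u′` is regular at `w¹ⱼ` iff the Bethe equation (B1ⱼ) holds, and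
`v - 2/(z-w⁰ⱼ)² - (k/w⁰ⱼ)/(z-w⁰ⱼ)` is regular at `w⁰ⱼ` iff the Bethe equation (B0ⱼ) holds. -/
theorem regular_iff_bethe (χ ℓ k : ℂ) (m₁ m₀ : ℕ)
    (w1 : Fin m₁ → ℂ) (w0 : Fin m₀ → ℂ)
    (hw1 : ∀ j, w1 j ≠ 0) (hw0 : ∀ j, w0 j ≠ 0)
    (hw1inj : Function.Injective w1) (hw0inj : Function.Injective w0)
    (hdisj : ∀ i j, w1 i ≠ w0 j) :
    (∀ j : Fin m₁,
      (∃ G : ℂ → ℂ, AnalyticAt ℂ G (w1 j) ∧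
          ∀ᶠ z in 𝓝[≠] (w1 j), G z = (uFun χ ℓ w1 w0 z) ^ 2 + uFun' ℓ w1 w0 z)
        ↔ ℓ / w1 j - ∑ s ∈ univ.erase j, 1 / (w1 j - w1 s)
            + ∑ s, 1 / (w1 j - w0 s) + χ = 0) ∧
    (∀ j : Fin m₀,
      (∃ G : ℂ → ℂ, AnalyticAt ℂ G (w0 j) ∧
          ∀ᶠ z in 𝓝[≠] (w0 j), G z = (uFun χ ℓ w1 w0 z) ^ 2 + uFun' ℓ w1 w0 z
            - 2 / (z - w0 j) ^ 2 - (k / w0 j) / (z - w0 j))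
        ↔ (k / 2 - ℓ) / w0 j + ∑ s, 1 / (w0 j - w1 s)
            - ∑ s ∈ univ.erase j, 1 / (w0 j - w0 s) - χ = 0) := by
  constructor
  · intro j
    set p := w1 j with hpdef
    have hp0 : p ≠ 0 := hw1 j
    have hp1 : ∀ s ∈ univ.erase j, p ≠ w1 s := by
      intro s hs
      exact fun h => (Finset.mem_erase.mp hs).1 (hw1inj h).symm
    have hp0' : ∀ s ∈ (univ : Finset (Fin m₀)), p ≠ w0 s := fun s _ => hdisj j s
    set A := Rfn χ ℓ w1 w0 (univ.erase j) univ with hAdef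
    set D := Dfn ℓ p w1 w0 (univ.erase j) univ with hDdef
    set T := Tfn ℓ w1 w0 (univ.erase j) univ with hTdef
    have hA : AnalyticAt ℂ A p := Rfn_analytic _ _ _ _ _ _ _ hp0 hp1 hp0'
    have hD : AnalyticAt ℂ D p := Dfn_analytic _ _ _ _ _ _ hp0 hp1 hp0'
    have hT : AnalyticAt ℂ T p := Tfn_analytic _ _ _ _ _ _ hp0 hp1 hp0'
    have hH : AnalyticAt ℂ (fun z => 2 * D z + (A z) ^ 2 + T z) p :=
      ((analyticAt_const.mul hD).add (hA.pow 2)).add hT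
    -- the eventual identity
    have hev : ∀ᶠ z in 𝓝[≠] p, (uFun χ ℓ w1 w0 z) ^ 2 + uFun' ℓ w1 w0 z
        = (2 * A p) / (z - p) + (2 * D z + (A z) ^ 2 + T z) := by
      have h0 : ∀ᶠ z in 𝓝 p, z ≠ 0 := eventually_ne_nhds hp0
      have h1 : ∀ᶠ z in 𝓝 p, ∀ s ∈ univ.erase j, z ≠ w1 s := by
        rw [eventually_all_finset]
        exact fun s hs => eventually_ne_nhds (hp1 s hs)
      have h2 : ∀ᶠ z in 𝓝 p, ∀ s : Fin m₀, z ≠ w0 s :=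
        eventually_all.mpr fun s => eventually_ne_nhds (hdisj j s)
      filter_upwards [((h0.and (h1.and h2)).filter_mono nhdsWithin_le_nhds),
        self_mem_nhdsWithin] with z hz hzp
      obtain ⟨hz0, hz1, hz2⟩ := hz
      have hzp' : z ≠ p := hzp
      have e1 : uFun χ ℓ w1 w0 z = 1 / (z - p) + A z := by
        rw [hAdef]
        unfold uFun Rfn
        rw [← Finset.add_sum_erase _ (fun s => 1 / (z - w1 s)) (mem_univ j)]
        ring
      have e2 : uFun' ℓ w1 w0 z = -(1 / (z - p) ^ 2) + T z := by
        rw [hTdef]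
        unfold uFun' Tfn
        rw [← Finset.add_sum_erase _ (fun s => 1 / (z - w1 s) ^ 2) (mem_univ j)]
        ring
      have e3 : A z = A p + (z - p) * D z := by
        rw [hAdef, hDdef]
        exact Rfn_shift χ ℓ w1 w0 _ _ p z hz0 hp0 hz1 hp1
          (fun s _ => hz2 s) hp0'
      exact combine1 (z - p) (A z) (A p) (D z) (T z) _ _
        (sub_ne_zero.mpr hzp') e1 e2 e3
    have step : (∃ G : ℂ → ℂ, AnalyticAt ℂ G p ∧
        ∀ᶠ z in 𝓝[≠] p, G z = (uFun χ ℓ w1 w0 z) ^ 2 + uFun' ℓ w1 w0 z)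
        ↔ 2 * A p = 0 := by
      rw [← pole_coeff_iff p (2 * A p) _ hH]
      constructor
      · rintro ⟨G, hG, he⟩
        exact ⟨G, hG, by filter_upwards [he, hev] with z hz1 hz2; rw [hz1, hz2]⟩
      · rintro ⟨G, hG, he⟩
        exact ⟨G, hG, by filter_upwards [he, hev] with z hz1 hz2; rw [hz1, ← hz2]⟩
    rw [step, hAdef]
    unfold Rfn
    constructor
    · intro h
      linear_combination (-1 / 2 : ℂ) * h
    · intro h
      linear_combination (-2 : ℂ) * h
  · intro j
    set p := w0 j with hpdef
    have hp0 : p ≠ 0 := hw0 j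
    have hp1 : ∀ s ∈ (univ : Finset (Fin m₁)), p ≠ w1 s := fun s _ => (hdisj s j).symm
    have hp0' : ∀ s ∈ univ.erase j, p ≠ w0 s := by
      intro s hs
      exact fun h => (Finset.mem_erase.mp hs).1 (hw0inj h).symm
    set B := Rfn χ ℓ w1 w0 univ (univ.erase j) with hBdef
    set D := Dfn ℓ p w1 w0 univ (univ.erase j) with hDdef
    set T := Tfn ℓ w1 w0 univ (univ.erase j) with hTdef
    have hB : AnalyticAt ℂ B p := Rfn_analytic _ _ _ _ _ _ _ hp0 hp1 hp0'
    have hD : AnalyticAt ℂ D p := Dfn_analytic _ _ _ _ _ _ hp0 hp1 hp0'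
    have hT : AnalyticAt ℂ T p := Tfn_analytic _ _ _ _ _ _ hp0 hp1 hp0'
    have hH : AnalyticAt ℂ (fun z => -(2 * D z) + (B z) ^ 2 + T z) p :=
      (((analyticAt_const.mul hD).neg).add (hB.pow 2)).add hT
    have hev : ∀ᶠ z in 𝓝[≠] p, (uFun χ ℓ w1 w0 z) ^ 2 + uFun' ℓ w1 w0 z
          - 2 / (z - p) ^ 2 - (k / p) / (z - p)
        = (-(2 * B p) - k / p) / (z - p) + (-(2 * D z) + (B z) ^ 2 + T z) := by
      have h0 : ∀ᶠ z in 𝓝 p, z ≠ 0 := eventually_ne_nhds hp0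
      have h1 : ∀ᶠ z in 𝓝 p, ∀ s : Fin m₁, z ≠ w1 s :=
        eventually_all.mpr fun s => eventually_ne_nhds ((hdisj s j).symm)
      have h2 : ∀ᶠ z in 𝓝 p, ∀ s ∈ univ.erase j, z ≠ w0 s := by
        rw [eventually_all_finset]
        exact fun s hs => eventually_ne_nhds (hp0' s hs)
      filter_upwards [((h0.and (h1.and h2)).filter_mono nhdsWithin_le_nhds),
        self_mem_nhdsWithin] with z hz hzp
      obtain ⟨hz0, hz1, hz2⟩ := hz
      have hzp' : z ≠ p := hzp
      have e1 : uFun χ ℓ w1 w0 z = -(1 / (z - p)) + B z := by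
        rw [hBdef]
        unfold uFun Rfn
        rw [← Finset.add_sum_erase _ (fun s => 1 / (z - w0 s)) (mem_univ j)]
        ring
      have e2 : uFun' ℓ w1 w0 z = 1 / (z - p) ^ 2 + T z := by
        rw [hTdef]
        unfold uFun' Tfn
        rw [← Finset.add_sum_erase _ (fun s => 1 / (z - w0 s) ^ 2) (mem_univ j)]
        ring
      have e3 : B z = B p + (z - p) * D z := by
        rw [hBdef, hDdef]
        exact Rfn_shift χ ℓ w1 w0 _ _ p z hz0 hp0 (fun s _ => hz1 s) hp1 hz2 hp0'
      exact combine0 (z - p) (k / p) (B z) (B p) (D z) (T z) _ _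
        (sub_ne_zero.mpr hzp') e1 e2 e3
    have step : (∃ G : ℂ → ℂ, AnalyticAt ℂ G p ∧
        ∀ᶠ z in 𝓝[≠] p, G z = (uFun χ ℓ w1 w0 z) ^ 2 + uFun' ℓ w1 w0 z
          - 2 / (z - p) ^ 2 - (k / p) / (z - p))
        ↔ -(2 * B p) - k / p = 0 := by
      rw [← pole_coeff_iff p (-(2 * B p) - k / p) _ hH]
      constructor
      · rintro ⟨G, hG, he⟩
        exact ⟨G, hG, by filter_upwards [he, hev] with z hz1 hz2; rw [hz1, hz2]⟩
      · rintro ⟨G, hG, he⟩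
        exact ⟨G, hG, by filter_upwards [he, hev] with z hz1 hz2; rw [hz1, ← hz2]⟩
    rw [step, hBdef]
    unfold Rfn
    constructor
    · intro h
      linear_combination (-1 / 2 : ℂ) * h
    · intro h
      linear_combination (-2 : ℂ) * h
end

section
/- Let α ∈ ℝ with α > −1 and set k = −(2α+1)/(α+1) (equivalently α = −(k+1)/(k+2)). Fix ℓ, λ ∈ ℂ, an integer m ≥ 0, and nonzero pairwise distinct complex numbers w_1,…,w_m; set z_j = (2α+2)²·w_j. Define V(z) = (1 − Σ_j k/w_j)/z + ℓ(ℓ+1)/z² + Σ_j 2/(z−w_j)² + Σ_j (k/w_j)/(z−w_j), and for real x > 0 set φ(x) = x^{2α+2}/(2α+2)², φ′(x) = x^{2α+1}/(2α+2). Then for every real x > 0 such that x^{2α+2} ≠ z_j for all j, one has ( V(φ(x)) + λ·φ(x)^k )·φ′(x)² − (1/2)·{φ,x}(x) = [ 4(α+1)²ℓ(ℓ+1) + α² + 2α + 3/4 ]/x² + x^{2α} + Σ_{j=1}^m [ −2(2α+2)(2α+1)·x^{2α}/(x^{2α+2}−z_j) + 2(2α+2)²·x^{4α+2}/(x^{2α+2}−z_j)²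 ] + (2α+2)^{2α/(α+1)}·λ, where {φ,x} = φ′′′/φ′ − (3/2)(φ′′/φ′)² is the Schwarzian derivative and all real powers of the positive reals x and 2α+2 are real powers (rpow); in particular (1/2){φ,x}(x) = −(α²+2α+3/4)/x². -/
open Finset

/-- The potential `V(z)` of the `ŝl₂`-oper encoding a spectrum of the quantum KdV system:
`V(z) = (1 - Σ_j k/w_j)/z + ℓ(ℓ+1)/z² + Σ_j 2/(z-w_j)² + Σ_j (k/w_j)/(z-w_j)`. -/
noncomputable def Vpot (k : ℝ) (ℓ : ℂ) {m : ℕ} (w : Fin m → ℂ) (z : ℂ) : ℂ :=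
  (1 - ∑ j, (k : ℂ) / w j) / z + ℓ * (ℓ + 1) / z ^ 2
    + ∑ j, 2 / (z - w j) ^ 2 + ∑ j, ((k : ℂ) / w j) / (z - w j)

/-- `φ(x) = x^(2α+2)/(2α+2)²` (real power). -/
noncomputable def phiCh (α : ℝ) (x : ℝ) : ℝ := x ^ (2 * α + 2) / (2 * α + 2) ^ 2

/-- `φ′(x) = x^(2α+1)/(2α+2)` (real power). -/
noncomputable def phiCh' (α : ℝ) (x : ℝ) : ℝ := x ^ (2 * α + 1) / (2 * α + 2)

/-- The Schwarzian derivative `{φ,x} = φ′′′/φ′ - (3/2)(φ′′/φ′)²`, with `φ′′ = (φ′)′` and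
`φ′′′ = (φ′)′′` computed from `φ′`. -/
noncomputable def schwarzian (α : ℝ) (x : ℝ) : ℝ :=
  deriv (deriv (phiCh' α)) x / phiCh' α x
    - (3 / 2) * (deriv (phiCh' α) x / phiCh' α x) ^ 2

theorem kdv_change_of_variables (α : ℝ) (hα : -1 < α) (k : ℝ)
    (hk : k = -(2 * α + 1) / (α + 1))
    (ℓ lam : ℂ) (m : ℕ) (w : Fin m → ℂ) (hw : ∀ j, w j ≠ 0)
    (hwinj : Function.Injective w) :
    ∀ x : ℝ, 0 < x → (∀ j, ((x ^ (2 * α + 2) : ℝ) : ℂ) ≠ (((2 * α + 2) ^ 2 : ℝ) : ℂ) * w j) →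
      -- φ′ is indeed the derivative of φ
      HasDerivAt (phiCh α) (phiCh' α x) x ∧
      -- the transformed potential
      (Vpot k ℓ w ((phiCh α x : ℝ) : ℂ) + lam * ((phiCh α x ^ k : ℝ) : ℂ))
          * ((phiCh' α x : ℝ) : ℂ) ^ 2 - (1 / 2) * ((schwarzian α x : ℝ) : ℂ)
        = (4 * ((α : ℂ) + 1) ^ 2 * ℓ * (ℓ + 1) + (α : ℂ) ^ 2 + 2 * (α : ℂ) + 3 / 4)
              / (x : ℂ) ^ 2
          + ((x ^ (2 * α) : ℝ) : ℂ)
          + ∑ j, (-2 * (2 * (α : ℂ) + 2) * (2 * (α : ℂ) + 1) * ((x ^ (2 * α) : ℝ) : ℂ)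
                    / (((x ^ (2 * α + 2) : ℝ) : ℂ) - (((2 * α + 2) ^ 2 : ℝ) : ℂ) * w j)
                + 2 * (((2 * α + 2) ^ 2 : ℝ) : ℂ) * ((x ^ (4 * α + 2) : ℝ) : ℂ)
                    / (((x ^ (2 * α + 2) : ℝ) : ℂ) - (((2 * α + 2) ^ 2 : ℝ) : ℂ) * w j) ^ 2)
          + (((2 * α + 2) ^ (2 * α / (α + 1)) : ℝ) : ℂ) * lam ∧
      -- the explicit value of (1/2){φ,x}
      (1 / 2) * schwarzian α x = -(α ^ 2 + 2 * α + 3 / 4) / x ^ 2 := by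
  intro x hx hxz
  have ha1 : α + 1 ≠ 0 := ne_of_gt (by linarith)
  have hc : (0:ℝ) < 2*α+2 := by linarith
  have hcne : (2*α+2 : ℝ) ≠ 0 := hc.ne'
  -- Part 1: the derivative of φ
  have part1 : HasDerivAt (phiCh α) (phiCh' α x) x := by
    have h := (Real.hasDerivAt_rpow_const (x := x) (p := 2*α+2) (Or.inl hx.ne')).div_const
      ((2*α+2)^2)
    have hv : (2*α+2) * x ^ (2*α+2-1) / (2*α+2)^2 = phiCh' α x := by
      rw [phiCh', show 2*α+2-1 = 2*α+1 by ring]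
      field_simp
    exact hv ▸ h
  -- Part 3: the Schwarzian
  have hsch : (1 / 2) * schwarzian α x = -(α ^ 2 + 2 * α + 3 / 4) / x ^ 2 := by
    have hg : ∀ y : ℝ, y ≠ 0 → HasDerivAt (phiCh' α) ((2*α+1) * y^(2*α) / (2*α+2)) y := by
      intro y hy
      have h := (Real.hasDerivAt_rpow_const (x := y) (p := 2*α+1) (Or.inl hy)).div_const (2*α+2)
      have hv : (2*α+1) * y ^ (2*α+1-1) / (2*α+2) = (2*α+1) * y^(2*α) / (2*α+2) := by
        rw [show 2*α+1-1 = 2*α by ring]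
      exact hv ▸ h
    have hd1 : deriv (phiCh' α) =ᶠ[nhds x] fun y => (2*α+1) * y^(2*α) / (2*α+2) := by
      filter_upwards [eventually_ne_nhds hx.ne'] with y hy using (hg y hy).deriv
    have hd2 : deriv (deriv (phiCh' α)) x = (2*α+1) * (2*α * x^(2*α-1)) / (2*α+2) := by
      rw [hd1.deriv_eq]
      have h := ((Real.hasDerivAt_rpow_const (x := x) (p := 2*α) (Or.inl hx.ne')).const_mul
        (2*α+1)).div_const (2*α+2)
      exact h.deriv
    have hd3 : deriv (phiCh' α) x = (2*α+1) * x^(2*α) / (2*α+2) := (hg x hx.ne').deriv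
    have hu : (0:ℝ) < x ^ (2*α-1) := Real.rpow_pos_of_pos hx _
    have h2a : x ^ (2*α) = x ^ (2*α-1) * x := by
      rw [← Real.rpow_add_one hx.ne' (2*α-1)]; congr 1; ring
    have h2a1 : x ^ (2*α+1) = x ^ (2*α-1) * x * x := by
      rw [← Real.rpow_add_one hx.ne', ← Real.rpow_add_one hx.ne']; congr 1; ring
    rw [schwarzian, hd2, hd3, phiCh', h2a, h2a1]
    field_simp
    ring
  refine ⟨part1, ?_, hsch⟩
  -- Real power facts
  have hZr : x ^ (4*α+2) = x ^ (2*α) * x ^ (2*α+2) := by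
    rw [← Real.rpow_add hx]; congr 1; ring
  have hXr : x ^ (2*α+2) = x ^ 2 * x ^ (2*α) := by
    rw [show (2*α+2) = (2:ℝ) + 2*α by ring, Real.rpow_add hx, Real.rpow_two]
  have hkc : k * (2*α+2)^2 = -2*(2*α+2)*(2*α+1) := by
    rw [hk]; field_simp
  have hXpos : (0:ℝ) < x ^ (2*α+2) := Real.rpow_pos_of_pos hx _
  have hYpos : (0:ℝ) < x ^ (2*α) := Real.rpow_pos_of_pos hx _
  have hP2r : (phiCh' α x)^2 = x ^ (4*α+2) / (2*α+2)^2 := by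
    rw [phiCh', div_pow, ← Real.rpow_natCast (x ^ (2*α+1)) 2, ← Real.rpow_mul hx.le]
    norm_num; ring_nf
  have hb : phiCh α x ^ k * (phiCh' α x)^2 = (2*α+2) ^ (2*α/(α+1)) := by
    have h1 : phiCh α x ^ k = x ^ ((2*α+2)*k) / (2*α+2) ^ (2*k) := by
      rw [phiCh, Real.div_rpow hXpos.le (by positivity),
        ← Real.rpow_natCast (2*α+2) 2, ← Real.rpow_mul hc.le, ← Real.rpow_mul hx.le]
      norm_num
    have he : (2*α+2)*k = -(4*α+2) := by rw [hk]; field_simp; ring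
    rw [h1, hP2r, he, div_mul_div_comm, ← Real.rpow_add hx,
      show -(4*α+2)+(4*α+2) = (0:ℝ) by ring, Real.rpow_zero,
      ← Real.rpow_natCast (2*α+2) 2, ← Real.rpow_add hc,
      show (2*k + ((2:ℕ):ℝ)) = -(2*α/(α+1)) by push_cast; rw [hk]; field_simp; ring,
      Real.rpow_neg hc.le, one_div, inv_inv]
  -- Complex setup
  set XC : ℂ := ((x ^ (2*α+2) : ℝ) : ℂ) with hXC
  set YC : ℂ := ((x ^ (2*α) : ℝ) : ℂ) with hYC
  set ZC : ℂ := ((x ^ (4*α+2) : ℝ) : ℂ) with hZC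
  set c2C : ℂ := (((2*α+2)^2 : ℝ) : ℂ) with hc2C
  have hXCne : XC ≠ 0 := by rw [hXC]; exact_mod_cast hXpos.ne'
  have hYCne : YC ≠ 0 := by rw [hYC]; exact_mod_cast hYpos.ne'
  have hc2Cne : c2C ≠ 0 := by rw [hc2C]; exact_mod_cast (by positivity : ((2*α+2:ℝ))^2 ≠ 0)
  have hxCne : (x:ℂ) ≠ 0 := by exact_mod_cast hx.ne'
  have hAne : (2*(α:ℂ)+2) ≠ 0 := by
    have : ((2*α+2 : ℝ) : ℂ) ≠ 0 := Complex.ofReal_ne_zero.2 hcne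
    push_cast at this; exact this
  have hZeq : ZC = YC * XC := by rw [hXC, hYC, hZC, hZr]; push_cast; ring
  have hXeq : XC = (x:ℂ)^2 * YC := by rw [hXC, hYC, hXr]; push_cast; ring
  have hc2eq : c2C = (2*(α:ℂ)+2)^2 := by rw [hc2C]; push_cast; ring
  have hzj : ∀ j, XC - c2C * w j ≠ 0 := fun j => sub_ne_zero_of_ne (hxz j)
  have hΦ : ((phiCh α x : ℝ) : ℂ) = XC / c2C := by
    rw [phiCh, hXC, hc2C]; push_cast; ring
  have hP2 : ((phiCh' α x : ℝ) : ℂ)^2 = YC * XC / c2C := by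
    rw [← Complex.ofReal_pow, hP2r, hZr, hYC, hXC, hc2C]; push_cast; ring
  have hkcC : (k:ℂ) * c2C = -2*(2*(α:ℂ)+2)*(2*(α:ℂ)+1) := by
    rw [hc2C]
    calc (k:ℂ) * ((((2*α+2)^2 : ℝ)) : ℂ) = ((k * (2*α+2)^2 : ℝ) : ℂ) := by push_cast; ring
      _ = _ := by rw [hkc]; push_cast; ring
  have hsub : ∀ j : Fin m, XC / c2C - w j = (XC - c2C * w j) / c2C := by
    intro j; field_simp
  -- the V-part
  have eV : (Vpot k ℓ w ((phiCh α x : ℝ) : ℂ)) * ((phiCh' α x : ℝ) : ℂ)^2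
      = 4*((α:ℂ)+1)^2*ℓ*(ℓ+1)/(x:ℂ)^2 + YC
        + ∑ j, (-2*(2*(α:ℂ)+2)*(2*(α:ℂ)+1)*YC/(XC - c2C*w j)
            + 2*c2C*ZC/(XC - c2C*w j)^2) := by
    rw [Vpot, hΦ, hP2]
    simp only [hsub]
    rw [add_mul, add_mul, add_mul, Finset.sum_mul, Finset.sum_mul]
    have t1 : (1 - ∑ j, (k:ℂ)/w j)/(XC/c2C) * (YC*XC/c2C)
        = YC - ∑ j, (k:ℂ)/w j * YC := by
      have h : (1 - ∑ j, (k:ℂ)/w j)/(XC/c2C) * (YC*XC/c2C)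
          = (1 - ∑ j, (k:ℂ)/w j) * YC := by
        field_simp
      rw [h, sub_mul, one_mul, Finset.sum_mul]
    have t2 : ℓ*(ℓ+1)/(XC/c2C)^2 * (YC*XC/c2C) = 4*((α:ℂ)+1)^2*ℓ*(ℓ+1)/(x:ℂ)^2 := by
      rw [hc2eq, hXeq]
      field_simp
      ring
    have t3 : ∀ j : Fin m, 2/((XC - c2C*w j)/c2C)^2 * (YC*XC/c2C)
        = 2*c2C*ZC/(XC - c2C*w j)^2 := by
      intro j
      rw [hZeq, div_pow, div_div_eq_mul_div, div_mul_div_comm,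
        div_eq_div_iff (mul_ne_zero (pow_ne_zero 2 (hzj j)) hc2Cne) (pow_ne_zero 2 (hzj j))]
      ring
    have t4 : ∀ j : Fin m, ((k:ℂ)/w j)/((XC - c2C*w j)/c2C) * (YC*XC/c2C)
        = (k:ℂ)/w j * YC + (-2*(2*(α:ℂ)+2)*(2*(α:ℂ)+1)*YC/(XC - c2C*w j)) := by
      intro j
      have hwj := hw j
      have hDj := hzj j
      have hDj' : XC - w j * c2C ≠ 0 := by rwa [mul_comm (w j) c2C]
      rw [div_div_eq_mul_div, div_mul_div_comm, ← hkcC]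
      field_simp
      ring
    rw [t1, t2]
    simp only [t3, t4]
    rw [Finset.sum_add_distrib, Finset.sum_add_distrib]
    ring
  -- the λ-part
  have e5 : lam * ((phiCh α x ^ k : ℝ) : ℂ) * ((phiCh' α x : ℝ) : ℂ)^2
      = (((2*α+2) ^ (2*α/(α+1)) : ℝ) : ℂ) * lam := by
    calc lam * ((phiCh α x ^ k : ℝ) : ℂ) * ((phiCh' α x : ℝ) : ℂ)^2
        = lam * ((phiCh α x ^ k * (phiCh' α x)^2 : ℝ) : ℂ) := by push_cast; ring
      _ = _ := by rw [hb]; ring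
  -- the Schwarzian part, complexified
  have e6 : (1/2 : ℂ) * ((schwarzian α x : ℝ) : ℂ)
      = -((α:ℂ)^2 + 2*(α:ℂ) + 3/4)/(x:ℂ)^2 := by
    calc (1/2 : ℂ) * ((schwarzian α x : ℝ) : ℂ)
        = ((1/2 * schwarzian α x : ℝ) : ℂ) := by push_cast; ring
      _ = _ := by rw [hsch]; push_cast; ring
  calc (Vpot k ℓ w ((phiCh α x : ℝ) : ℂ) + lam * ((phiCh α x ^ k : ℝ) : ℂ))
          * ((phiCh' α x : ℝ) : ℂ) ^ 2 - (1 / 2) * ((schwarzian α x : ℝ) : ℂ)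
      = (Vpot k ℓ w ((phiCh α x : ℝ) : ℂ)) * ((phiCh' α x : ℝ) : ℂ)^2
        + lam * ((phiCh α x ^ k : ℝ) : ℂ) * ((phiCh' α x : ℝ) : ℂ)^2
        - (1/2 : ℂ) * ((schwarzian α x : ℝ) : ℂ) := by ring
    _ = _ := by
        rw [eV, e5, e6]
        ring
end

section
/- Assume the Bethe equations (RB1_j) for j = 1,…,m₁ and (RB0_j) for j = 1,…,m₀ hold. Then for every z ∈ ℂ distinct from all z_i, w¹_j, w⁰_j, one has u(z)² + u′(z) = Σ_{i=1}^N ℓ_i(ℓ_i+1)/(z−z_i)² + Σ_{i=1}^N c_i/(z−z_i) + Σ_{j=1}^{m₀} 2/(z−w⁰_j)² + Σ_{j=1}^{m₀} r_j/(z−w⁰_j), where c_i = 2ℓ_i·( Σ_{j≠i} ℓ_j/(z_i−z_j) − Σ_{j=1}^{m₁} 1/(z_i−w¹_j) + Σ_{j=1}^{m₀} 1/(z_i−w⁰_j) ), r_j = Σ_{i=1}^N k_i/(w⁰_j−z_i), and u′(z) = Σ_i ℓ_i/(z−z_i)² − Σ_j 1/(z−w¹_j)² + Σ_j 1/(z−w⁰_j)².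 In particular u² + u′ has no poles at the points w¹_j. -/
open Finset

/-- `u(z) = -Σ_i ℓ_i/(z - z_i) + Σ_j 1/(z - w¹_j) - Σ_j 1/(z - w⁰_j)`. -/
noncomputable def uG {N m₁ m₀ : ℕ} (l : Fin N → ℂ) (z : Fin N → ℂ)
    (w1 : Fin m₁ → ℂ) (w0 : Fin m₀ → ℂ) (s : ℂ) : ℂ :=
  -∑ i, l i / (s - z i) + ∑ j, 1 / (s - w1 j) - ∑ j, 1 / (s - w0 j)

/-- `u′(z) = Σ_i ℓ_i/(z - z_i)² - Σ_j 1/(z - w¹_j)² + Σ_j 1/(z - w⁰_j)²`. -/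
noncomputable def uG' {N m₁ m₀ : ℕ} (l : Fin N → ℂ) (z : Fin N → ℂ)
    (w1 : Fin m₁ → ℂ) (w0 : Fin m₀ → ℂ) (s : ℂ) : ℂ :=
  ∑ i, l i / (s - z i) ^ 2 - ∑ j, 1 / (s - w1 j) ^ 2 + ∑ j, 1 / (s - w0 j) ^ 2

lemma sq_poles {ι : Type*} [Fintype ι] [DecidableEq ι] (p c : ι → ℂ)
    (hp : Function.Injective p) (s : ℂ) (hs : ∀ α, s ≠ p α) :
    (∑ α, c α / (s - p α)) ^ 2
      = ∑ α, (c α) ^ 2 / (s - p α) ^ 2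
        + ∑ α, (2 * c α * ∑ β, c β / (p α - p β)) / (s - p α) := by
  have hsp : ∀ α, s - p α ≠ 0 := fun α => sub_ne_zero.2 (hs α)
  have hpq : ∀ {α β : ι}, α ≠ β → p α - p β ≠ 0 :=
    fun h => sub_ne_zero.2 (fun e => h (hp e))
  set g : ι → ι → ℂ := fun α β => c α * c β / (p α - p β) / (s - p α) with hg
  have key : ∀ α : ι, ∑ β, (c α / (s - p α)) * (c β / (s - p β))
      = (c α) ^ 2 / (s - p α) ^ 2 + ∑ β ∈ univ.erase α, ((c α / (s - p α)) * (c β / (s - p β))) := by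
    intro α
    rw [← Finset.add_sum_erase _ _ (mem_univ α)]
    congr 1
    rw [div_mul_div_comm, ← sq, ← sq]
  have split : ∀ {α β : ι}, α ≠ β →
      (c α / (s - p α)) * (c β / (s - p β)) = g α β + g β α := by
    intro α β hab
    have h1 := hsp α
    have h2 := hsp β
    have h3 := hpq hab
    have h4 := hpq hab.symm
    simp only [hg]
    field_simp
    ring
  have swap : ∑ α, ∑ β ∈ univ.erase α, g β α = ∑ α, ∑ β ∈ univ.erase α, g α β := by
    rw [Finset.sum_comm' (t' := univ) (s' := fun β => univ.erase β)]
    intro x y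
    simp [eq_comm, ne_comm]
  calc (∑ α, c α / (s - p α)) ^ 2
      = ∑ α, ∑ β, (c α / (s - p α)) * (c β / (s - p β)) := by
        rw [sq, Finset.sum_mul_sum]
    _ = ∑ α, ((c α) ^ 2 / (s - p α) ^ 2 + ∑ β ∈ univ.erase α, ((c α / (s - p α)) * (c β / (s - p β)))) := by
        exact Finset.sum_congr rfl fun α _ => key α
    _ = ∑ α, (c α) ^ 2 / (s - p α) ^ 2 + ∑ α, ∑ β ∈ univ.erase α, ((c α / (s - p α)) * (c β / (s - p β))) := by
        rw [Finset.sum_add_distrib]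
    _ = ∑ α, (c α) ^ 2 / (s - p α) ^ 2 + ∑ α, (2 * c α * ∑ β, c β / (p α - p β)) / (s - p α) := by
        congr 1
        have : ∀ α : ι, ∑ β ∈ univ.erase α, ((c α / (s - p α)) * (c β / (s - p β)))
            = ∑ β ∈ univ.erase α, g α β + ∑ β ∈ univ.erase α, g β α := by
          intro α
          rw [← Finset.sum_add_distrib]
          exact Finset.sum_congr rfl fun β hβ => split (Finset.ne_of_mem_erase hβ).symm
        rw [Finset.sum_congr rfl fun α _ => this α, Finset.sum_add_distrib, swap,
          ← Finset.sum_add_distrib]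
        refine Finset.sum_congr rfl fun α _ => ?_
        have herase : ∑ β ∈ univ.erase α, g α β = ∑ β, g α β := by
          apply Finset.sum_erase
          simp [hg]
        rw [herase]
        have : ∑ β, g α β = c α * (∑ β, c β / (p α - p β)) / (s - p α) := by
          rw [Finset.mul_sum, Finset.sum_div]
          refine Finset.sum_congr rfl fun β _ => ?_
          simp [hg, mul_div_assoc]
        rw [this]
        ring

theorem miura_global_of_bethe_regular_sing (N m₁ m₀ : ℕ) (hN : 1 ≤ N)
    (l k : Fin N → ℂ) (z : Fin N → ℂ) (w1 : Fin m₁ → ℂ) (w0 : Fin m₀ → ℂ)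
    (hzinj : Function.Injective z) (hw1inj : Function.Injective w1)
    (hw0inj : Function.Injective w0)
    (hzw1 : ∀ i j, z i ≠ w1 j) (hzw0 : ∀ i j, z i ≠ w0 j)
    (hw1w0 : ∀ i j, w1 i ≠ w0 j)
    (hB1 : ∀ j, ∑ i, l i / (w1 j - z i) - ∑ s ∈ univ.erase j, 1 / (w1 j - w1 s)
      + ∑ s, 1 / (w1 j - w0 s) = 0)
    (hB0 : ∀ j, ∑ i, (k i / 2 - l i) / (w0 j - z i) + ∑ s, 1 / (w0 j - w1 s)
      - ∑ s ∈ univ.erase j, 1 / (w0 j - w0 s) = 0) :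
    ∀ s : ℂ, (∀ i, s ≠ z i) → (∀ j, s ≠ w1 j) → (∀ j, s ≠ w0 j) →
      (uG l z w1 w0 s) ^ 2 + uG' l z w1 w0 s
        = ∑ i, l i * (l i + 1) / (s - z i) ^ 2
          + ∑ i, (2 * l i * (∑ j ∈ univ.erase i, l j / (z i - z j)
              - ∑ j, 1 / (z i - w1 j) + ∑ j, 1 / (z i - w0 j))) / (s - z i)
          + ∑ j, 2 / (s - w0 j) ^ 2
          + ∑ j, (∑ i, k i / (w0 j - z i)) / (s - w0 j) := by
  intro s hsz hsw1 hsw0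
  set P : Fin N ⊕ Fin m₁ ⊕ Fin m₀ → ℂ := Sum.elim z (Sum.elim w1 w0) with hP
  set C : Fin N ⊕ Fin m₁ ⊕ Fin m₀ → ℂ :=
    Sum.elim (fun i => -l i) (Sum.elim (fun _ => 1) (fun _ => -1)) with hC
  have hPinj : Function.Injective P := by
    rintro (i | j | j) (i' | j' | j') h <;>
      simp only [hP, Sum.elim_inl, Sum.elim_inr] at h
    · exact congrArg Sum.inl (hzinj h)
    · exact absurd h (hzw1 i j')
    · exact absurd h (hzw0 i j')
    · exact absurd h.symm (hzw1 i' j)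
    · exact congrArg (Sum.inr ∘ Sum.inl) (hw1inj h)
    · exact absurd h (hw1w0 j j')
    · exact absurd h.symm (hzw0 i' j)
    · exact absurd h.symm (hw1w0 j' j)
    · exact congrArg (Sum.inr ∘ Sum.inr) (hw0inj h)
  have hs : ∀ α, s ≠ P α := by
    rintro (i | j | j) <;> simp only [hP, Sum.elim_inl, Sum.elim_inr]
    exacts [hsz i, hsw1 j, hsw0 j]
  have e1 : uG l z w1 w0 s = ∑ α, C α / (s - P α) := by
    simp only [Fintype.sum_sum_type, hP, hC, Sum.elim_inl, Sum.elim_inr, uG,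
      neg_div, Finset.sum_neg_distrib]
    ring
  rw [e1, sq_poles P C hPinj s hs]
  simp only [Fintype.sum_sum_type, hP, hC, Sum.elim_inl, Sum.elim_inr,
    neg_sq, one_pow, mul_one, one_mul, mul_neg, neg_mul, neg_neg, neg_div,
    Finset.sum_neg_distrib]
  -- erase sums equal full sums (diagonal terms vanish)
  have hEz : ∀ i, ∑ j ∈ univ.erase i, l j / (z i - z j) = ∑ j, l j / (z i - z j) :=
    fun i => Finset.sum_erase _ (by simp)
  have hB1' : ∀ j, ∑ i, l i / (w1 j - z i) - ∑ t, 1 / (w1 j - w1 t)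
      + ∑ t, 1 / (w1 j - w0 t) = 0 := by
    intro j
    rw [← Finset.sum_erase (univ) (f := fun t => 1 / (w1 j - w1 t)) (a := j) (by simp)]
    exact hB1 j
  have hB0' : ∀ j, ∑ i, (k i / 2 - l i) / (w0 j - z i) + ∑ t, 1 / (w0 j - w1 t)
      - ∑ t, 1 / (w0 j - w0 t) = 0 := by
    intro j
    rw [← Finset.sum_erase (univ) (f := fun t => 1 / (w0 j - w0 t)) (a := j) (by simp)]
    exact hB0 j
  have hQz : ∑ i, l i ^ 2 / (s - z i) ^ 2 + ∑ i, l i / (s - z i) ^ 2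
      = ∑ i, l i * (l i + 1) / (s - z i) ^ 2 := by
    rw [← Finset.sum_add_distrib]
    refine Finset.sum_congr rfl fun i _ => ?_
    rw [← add_div]
    congr 1
    ring
  have hQ0 : ∑ j, 1 / (s - w0 j) ^ 2 + ∑ j, 1 / (s - w0 j) ^ 2
      = ∑ j, 2 / (s - w0 j) ^ 2 := by
    rw [← Finset.sum_add_distrib]
    refine Finset.sum_congr rfl fun j _ => ?_
    rw [← add_div]
    norm_num
  have hZ : -∑ i, 2 * l i * (-∑ j, l j / (z i - z j)
        + (∑ j, 1 / (z i - w1 j) + -∑ j, 1 / (z i - w0 j))) / (s - z i)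
      = ∑ i, 2 * l i * (∑ j ∈ univ.erase i, l j / (z i - z j)
        - ∑ j, 1 / (z i - w1 j) + ∑ j, 1 / (z i - w0 j)) / (s - z i) := by
    rw [← Finset.sum_neg_distrib]
    refine Finset.sum_congr rfl fun i _ => ?_
    rw [hEz i]
    ring
  have hW1 : ∑ j, 2 * (-∑ i, l i / (w1 j - z i)
        + (∑ t, 1 / (w1 j - w1 t) + -∑ t, 1 / (w1 j - w0 t))) / (s - w1 j) = 0 := by
    refine Finset.sum_eq_zero fun j _ => ?_
    have h1 := hB1' j
    have : (-∑ i, l i / (w1 j - z i)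
        + (∑ t, 1 / (w1 j - w1 t) + -∑ t, 1 / (w1 j - w0 t))) = 0 := by
      linear_combination -h1
    rw [this]
    simp
  have hW0 : ∑ j, 2 * (-∑ i, l i / (w0 j - z i)
        + (∑ t, 1 / (w0 j - w1 t) + -∑ t, 1 / (w0 j - w0 t))) / (s - w0 j)
      = -∑ j, (∑ i, k i / (w0 j - z i)) / (s - w0 j) := by
    rw [← Finset.sum_neg_distrib]
    refine Finset.sum_congr rfl fun j _ => ?_
    have h1 := hB0' j
    have h2 : ∑ i, k i / (w0 j - z i)
        = 2 * ∑ i, l i / (w0 j - z i) + 2 * ∑ i, (k i / 2 - l i) / (w0 j - z i) := by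
      rw [Finset.mul_sum, Finset.mul_sum, ← Finset.sum_add_distrib]
      refine Finset.sum_congr rfl fun i _ => ?_
      have hd : w0 j - z i ≠ 0 := sub_ne_zero.2 fun e => hzw0 i j e.symm
      field_simp
      ring
    have h3 : (-∑ i, l i / (w0 j - z i)
        + (∑ t, 1 / (w0 j - w1 t) + -∑ t, 1 / (w0 j - w0 t)))
        = -(∑ i, k i / (w0 j - z i)) / 2 := by
      linear_combination h1 + h2 / 2
    rw [h3]
    ring
  simp only [uG']
  linear_combination hQz + hQ0 + hZ + hW1 - hW0
end

section
/- Let v(z) = u(z)² + u′(z), a rational function with possible poles only at the z_i, w¹_j and w⁰_j. Then: (a) for each j ∈ {1,…,m₁}, v extends analytically to a neighborhood of w¹_j (i.e., v has no pole at w¹_j) if and only if the Bethe equation (RB1_j) holds; (b) for each j ∈ {1,…,m₀}, the function z ↦ v(z) − 2/(z−w⁰_j)² − r_j/(z−w⁰_j), where r_j = Σ_{i=1}^N k_i/(w⁰_j−z_i), extends analytically to a neighborhood of w⁰_j if and only if the Bethe equation (RB0_j) holds. -/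
open Finset Topology

/-- Core removable-singularity criterion: `h(s)/(s-a) + g(s)` with `h, g` analytic at `a`
extends analytically over `a` iff `h a = 0`. -/
lemma key_lemma {a : ℂ} {h g : ℂ → ℂ} (hh : AnalyticAt ℂ h a) (hg : AnalyticAt ℂ g a) :
    (∃ G : ℂ → ℂ, AnalyticAt ℂ G a ∧ ∀ᶠ s in 𝓝[≠] a, G s = h s / (s - a) + g s) ↔ h a = 0 := by
  constructor
  · rintro ⟨G, hG, hGeq⟩
    have hφ : AnalyticAt ℂ (fun s => (s - a) * (G s - g s)) a :=
      ((analyticAt_id.sub analyticAt_const).mul (hG.sub hg))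
    have heq : ∀ᶠ s in 𝓝[≠] a, (s - a) * (G s - g s) = h s := by
      filter_upwards [hGeq, self_mem_nhdsWithin] with s hs hs'
      have hsa : s - a ≠ 0 := sub_ne_zero.mpr hs'
      rw [hs]; field_simp; ring
    have h1 : Filter.Tendsto (fun s => (s - a) * (G s - g s)) (𝓝[≠] a)
        (𝓝 ((a - a) * (G a - g a))) :=
      (hφ.continuousAt.tendsto).mono_left nhdsWithin_le_nhds
    have h2 : Filter.Tendsto h (𝓝[≠] a) (𝓝 (h a)) :=
      (hh.continuousAt.tendsto).mono_left nhdsWithin_le_nhds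
    have := tendsto_nhds_unique (h1.congr' heq) h2
    simpa using this.symm
  · intro ha
    obtain ⟨p, hp⟩ := hh
    refine ⟨fun s => dslope h a s + g s,
      (hp.has_fpower_series_dslope_fslope.analyticAt).add hg, ?_⟩
    filter_upwards [self_mem_nhdsWithin] with s hs
    rw [dslope_of_ne _ hs]
    simp [slope, ha, div_eq_inv_mul]

lemma sum_analytic₁ {m : ℕ} (c p : Fin m → ℂ) (a : ℂ) (S : Finset (Fin m))
    (hp : ∀ i ∈ S, p i ≠ a) :
    AnalyticAt ℂ (fun s => ∑ i ∈ S, c i / (s - p i)) a := by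
  apply Finset.analyticAt_fun_sum
  intro i hi
  exact analyticAt_const.div (analyticAt_id.sub analyticAt_const)
    (sub_ne_zero.mpr (Ne.symm (hp i hi)))

lemma sum_analytic₂ {m : ℕ} (c p : Fin m → ℂ) (a : ℂ) (S : Finset (Fin m))
    (hp : ∀ i ∈ S, p i ≠ a) :
    AnalyticAt ℂ (fun s => ∑ i ∈ S, c i / (s - p i) ^ 2) a := by
  apply Finset.analyticAt_fun_sum
  intro i hi
  exact analyticAt_const.div ((analyticAt_id.sub analyticAt_const).pow 2)
    (pow_ne_zero _ (sub_ne_zero.mpr (Ne.symm (hp i hi))))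

/-- `v = u² + u′` is regular at `w¹ⱼ` iff the Bethe equation (RB1ⱼ) holds, and
`v - 2/(z-w⁰ⱼ)² - rⱼ/(z-w⁰ⱼ)`, with `rⱼ = Σ_i k_i/(w⁰ⱼ - z_i)`, is regular at `w⁰ⱼ`
iff the Bethe equation (RB0ⱼ) holds. -/
theorem regular_iff_bethe_regular_sing (N m₁ m₀ : ℕ) (hN : 1 ≤ N)
    (l k : Fin N → ℂ) (z : Fin N → ℂ) (w1 : Fin m₁ → ℂ) (w0 : Fin m₀ → ℂ)
    (hzinj : Function.Injective z) (hw1inj : Function.Injective w1)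
    (hw0inj : Function.Injective w0)
    (hzw1 : ∀ i j, z i ≠ w1 j) (hzw0 : ∀ i j, z i ≠ w0 j)
    (hw1w0 : ∀ i j, w1 i ≠ w0 j) :
    (∀ j : Fin m₁,
      (∃ G : ℂ → ℂ, AnalyticAt ℂ G (w1 j) ∧
          ∀ᶠ s in 𝓝[≠] (w1 j), G s = (uG l z w1 w0 s) ^ 2 + uG' l z w1 w0 s)
        ↔ ∑ i, l i / (w1 j - z i) - ∑ s ∈ univ.erase j, 1 / (w1 j - w1 s)
            + ∑ s, 1 / (w1 j - w0 s) = 0) ∧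
    (∀ j : Fin m₀,
      (∃ G : ℂ → ℂ, AnalyticAt ℂ G (w0 j) ∧
          ∀ᶠ s in 𝓝[≠] (w0 j), G s = (uG l z w1 w0 s) ^ 2 + uG' l z w1 w0 s
            - 2 / (s - w0 j) ^ 2 - (∑ i, k i / (w0 j - z i)) / (s - w0 j))
        ↔ ∑ i, (k i / 2 - l i) / (w0 j - z i) + ∑ s, 1 / (w0 j - w1 s)
            - ∑ s ∈ univ.erase j, 1 / (w0 j - w0 s) = 0) := by
  constructor
  · -- part (a)
    intro j
    set a := w1 j with ha
    set h : ℂ → ℂ := fun s =>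
      -∑ i, l i / (s - z i) + ∑ t ∈ univ.erase j, 1 / (s - w1 t) - ∑ t, 1 / (s - w0 t)
      with hh
    set h₂ : ℂ → ℂ := fun s =>
      ∑ i, l i / (s - z i) ^ 2 - ∑ t ∈ univ.erase j, 1 / (s - w1 t) ^ 2
        + ∑ t, 1 / (s - w0 t) ^ 2 with hh₂
    have hhA : AnalyticAt ℂ h a := by
      apply AnalyticAt.sub
      apply AnalyticAt.add
      · exact (sum_analytic₁ l z a univ (fun i _ => hzw1 i j)).neg
      · exact sum_analytic₁ (fun _ => 1) w1 a (univ.erase j)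
          (fun t ht => fun hc => (Finset.mem_erase.mp ht).1 (hw1inj hc))
      · exact sum_analytic₁ (fun _ => 1) w0 a univ (fun t _ => (hw1w0 j t).symm)
    have hh₂A : AnalyticAt ℂ h₂ a := by
      apply AnalyticAt.add
      apply AnalyticAt.sub
      · exact sum_analytic₂ l z a univ (fun i _ => hzw1 i j)
      · exact sum_analytic₂ (fun _ => 1) w1 a (univ.erase j)
          (fun t ht => fun hc => (Finset.mem_erase.mp ht).1 (hw1inj hc))
      · exact sum_analytic₂ (fun _ => 1) w0 a univ (fun t _ => (hw1w0 j t).symm)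
    have hid : ∀ s : ℂ, (uG l z w1 w0 s) ^ 2 + uG' l z w1 w0 s
        = (2 * h s) / (s - a) + (h s ^ 2 + h₂ s) := by
      intro s
      have e1 : (∑ t, 1 / (s - w1 t)) = 1 / (s - a) + ∑ t ∈ univ.erase j, 1 / (s - w1 t) :=
        (Finset.add_sum_erase univ _ (Finset.mem_univ j)).symm
      have e2 : (∑ t, 1 / (s - w1 t) ^ 2)
          = 1 / (s - a) ^ 2 + ∑ t ∈ univ.erase j, 1 / (s - w1 t) ^ 2 :=
        (Finset.add_sum_erase univ _ (Finset.mem_univ j)).symm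
      simp only [uG, uG', e1, e2, hh, hh₂]
      generalize s - a = x
      ring
    have hiff : (∃ G : ℂ → ℂ, AnalyticAt ℂ G a ∧
        ∀ᶠ s in 𝓝[≠] a, G s = (uG l z w1 w0 s) ^ 2 + uG' l z w1 w0 s)
        ↔ (∃ G : ℂ → ℂ, AnalyticAt ℂ G a ∧
        ∀ᶠ s in 𝓝[≠] a, G s = (2 * h s) / (s - a) + (h s ^ 2 + h₂ s)) := by
      apply exists_congr; intro G
      apply and_congr_right'
      exact Filter.eventually_congr (Filter.Eventually.of_forall fun s => by rw [hid s])
    have hKeyA : AnalyticAt ℂ (fun s => 2 * h s) a := analyticAt_const.mul hhA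
    have hgA : AnalyticAt ℂ (fun s => h s ^ 2 + h₂ s) a := (hhA.pow 2).add hh₂A
    refine hiff.trans ((key_lemma hKeyA hgA).trans ?_)
    constructor
    · intro H; simp only [hh] at H; linear_combination (-1/2 : ℂ) * H
    · intro H; simp only [hh]; linear_combination (-2 : ℂ) * H
  · -- part (b)
    intro j
    set a := w0 j with ha
    set r : ℂ := ∑ i, k i / (w0 j - z i) with hr
    set h : ℂ → ℂ := fun s =>
      -∑ i, l i / (s - z i) + ∑ t, 1 / (s - w1 t) - ∑ t ∈ univ.erase j, 1 / (s - w0 t)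
      with hh
    set h₂ : ℂ → ℂ := fun s =>
      ∑ i, l i / (s - z i) ^ 2 - ∑ t, 1 / (s - w1 t) ^ 2
        + ∑ t ∈ univ.erase j, 1 / (s - w0 t) ^ 2 with hh₂
    have hhA : AnalyticAt ℂ h a := by
      apply AnalyticAt.sub
      apply AnalyticAt.add
      · exact (sum_analytic₁ l z a univ (fun i _ => hzw0 i j)).neg
      · exact sum_analytic₁ (fun _ => 1) w1 a univ (fun t _ => hw1w0 t j)
      · exact sum_analytic₁ (fun _ => 1) w0 a (univ.erase j)
          (fun t ht => fun hc => (Finset.mem_erase.mp ht).1 (hw0inj hc))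
    have hh₂A : AnalyticAt ℂ h₂ a := by
      apply AnalyticAt.add
      apply AnalyticAt.sub
      · exact sum_analytic₂ l z a univ (fun i _ => hzw0 i j)
      · exact sum_analytic₂ (fun _ => 1) w1 a univ (fun t _ => hw1w0 t j)
      · exact sum_analytic₂ (fun _ => 1) w0 a (univ.erase j)
          (fun t ht => fun hc => (Finset.mem_erase.mp ht).1 (hw0inj hc))
    have hid : ∀ s : ℂ, (uG l z w1 w0 s) ^ 2 + uG' l z w1 w0 s
          - 2 / (s - a) ^ 2 - r / (s - a)
        = (-2 * h s - r) / (s - a) + (h s ^ 2 + h₂ s) := by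
      intro s
      have e1 : (∑ t, 1 / (s - w0 t)) = 1 / (s - a) + ∑ t ∈ univ.erase j, 1 / (s - w0 t) :=
        (Finset.add_sum_erase univ _ (Finset.mem_univ j)).symm
      have e2 : (∑ t, 1 / (s - w0 t) ^ 2)
          = 1 / (s - a) ^ 2 + ∑ t ∈ univ.erase j, 1 / (s - w0 t) ^ 2 :=
        (Finset.add_sum_erase univ _ (Finset.mem_univ j)).symm
      simp only [uG, uG', e1, e2, hh, hh₂]
      generalize s - a = x
      ring
    have hiff : (∃ G : ℂ → ℂ, AnalyticAt ℂ G a ∧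
        ∀ᶠ s in 𝓝[≠] a, G s = (uG l z w1 w0 s) ^ 2 + uG' l z w1 w0 s
          - 2 / (s - a) ^ 2 - r / (s - a))
        ↔ (∃ G : ℂ → ℂ, AnalyticAt ℂ G a ∧
        ∀ᶠ s in 𝓝[≠] a, G s = (-2 * h s - r) / (s - a) + (h s ^ 2 + h₂ s)) := by
      apply exists_congr; intro G
      apply and_congr_right'
      exact Filter.eventually_congr (Filter.Eventually.of_forall fun s => by rw [hid s])
    have hKeyA : AnalyticAt ℂ (fun s => -2 * h s - r) a :=
      (analyticAt_const.mul hhA).sub analyticAt_const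
    have hgA : AnalyticAt ℂ (fun s => h s ^ 2 + h₂ s) a := (hhA.pow 2).add hh₂A
    refine hiff.trans ((key_lemma hKeyA hgA).trans ?_)
    have esplit : ∑ i, (k i / 2 - l i) / (w0 j - z i)
        = (∑ i, k i / (w0 j - z i)) / 2 - ∑ i, l i / (w0 j - z i) := by
      rw [Finset.sum_div, ← Finset.sum_sub_distrib]
      exact Finset.sum_congr rfl fun i _ => by ring
    rw [esplit]
    constructor
    · intro H; simp only [hh, hr] at H; linear_combination (-1/2 : ℂ) * H
    · intro H; simp only [hh, hr]; linear_combination (-2 : ℂ) * H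
end

section
/- Let w, λ ∈ ℂ and let h : ℂ → ℂ be analytic at w. Define, for z ≠ w, u(z) = 1/(z−w) + h(z) and the 2×2 matrix-valued functions A(z) = [[u(z), λ],[1, −u(z)]] and g(z) = [[1, −1/(z−w)],[0, 1]]. Then for all z ≠ w in a punctured neighborhood of w, g(z)A(z)g(z)^{−1} − g′(z)g(z)^{−1} = [[h(z), λ + 2h(z)/(z−w)],[1, −h(z)]]. Consequently the matrix-valued function z ↦ g(z)A(z)g(z)^{−1} − g′(z)g(z)^{−1} − (2h(w)/(z−w))·E₁₂ (where E₁₂ is the elementary matrix with 1 in position (1,2)) extends analytically to w, and g A g^{−1} − g′g^{−1} itself extends analytically to w if and only if h(w) = 0. -/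
open Topology

/-- The gauge matrix `g(z) = [[1, -1/(z-w)], [0, 1]]`. -/
noncomputable def gMat (w : ℂ) (z : ℂ) : Matrix (Fin 2) (Fin 2) ℂ :=
  !![1, -1 / (z - w); 0, 1]

/-- The entrywise derivative `g′(z)` of `g`. -/
noncomputable def gMat' (w : ℂ) (z : ℂ) : Matrix (Fin 2) (Fin 2) ℂ :=
  Matrix.of fun i j => deriv (fun s => gMat w s i j) z

/-- The Miura connection matrix `A(z) = [[u(z), λ], [1, -u(z)]]` with
`u(z) = 1/(z-w) + h(z)`. -/
noncomputable def AMat (w lam : ℂ) (h : ℂ → ℂ) (z : ℂ) : Matrix (Fin 2) (Fin 2) ℂ :=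
  !![1 / (z - w) + h z, lam; 1, -(1 / (z - w) + h z)]

/-- The gauge transform `g A g⁻¹ - g′ g⁻¹`. -/
noncomputable def gaugeTr (w lam : ℂ) (h : ℂ → ℂ) (z : ℂ) : Matrix (Fin 2) (Fin 2) ℂ :=
  gMat w z * AMat w lam h z * (gMat w z)⁻¹ - gMat' w z * (gMat w z)⁻¹

lemma gMat_inv (w z : ℂ) : (gMat w z)⁻¹ = !![1, 1 / (z - w); 0, 1] := by
  apply Matrix.inv_eq_right_inv
  simp [gMat, Matrix.mul_fin_two, Matrix.one_fin_two]
  ring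

lemma gMat'_eq {w z : ℂ} (hz : z ≠ w) : gMat' w z = !![0, 1 / (z - w) ^ 2; 0, 0] := by
  have hzw : z - w ≠ 0 := sub_ne_zero.2 hz
  have hd : HasDerivAt (fun s : ℂ => -1 / (s - w)) (1 / (z - w) ^ 2) z := by
    have h1 : HasDerivAt (fun s : ℂ => s - w) 1 z := (hasDerivAt_id z).sub_const w
    have h2 := h1.inv hzw
    have h3 : HasDerivAt (fun s : ℂ => -(s - w)⁻¹) (-(-1 / (z - w) ^ 2)) z := h2.neg
    convert h3 using 1
    · funext s; rw [neg_div, one_div]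
    · rw [neg_div, neg_neg]
  ext i j
  fin_cases i <;> fin_cases j <;>
    simp [gMat', gMat, hd.deriv]

lemma gaugeTr_eq {w z : ℂ} (lam : ℂ) (h : ℂ → ℂ) (hz : z ≠ w) :
    gaugeTr w lam h z = !![h z, lam + 2 * h z / (z - w); 1, -h z] := by
  have hzw : z - w ≠ 0 := sub_ne_zero.2 hz
  rw [gaugeTr, gMat_inv, gMat'_eq hz]
  ext i j
  fin_cases i <;> fin_cases j <;>
    · simp [gMat, AMat, Matrix.mul_fin_two]
      try field_simp
      try ring

lemma dslope_analytic {w : ℂ} {h : ℂ → ℂ} (hh : AnalyticAt ℂ h w) :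
    AnalyticAt ℂ (dslope h w) w := by
  obtain ⟨p, hp⟩ := hh
  exact ⟨p.fslope, hp.has_fpower_series_dslope_fslope⟩

theorem gauge_regular_iff_bethe_at_simple_pole (w lam : ℂ) (h : ℂ → ℂ)
    (hh : AnalyticAt ℂ h w) :
    -- the explicit form of the gauge transform near w
    (∀ᶠ z in 𝓝[≠] w,
      gaugeTr w lam h z = !![h z, lam + 2 * h z / (z - w); 1, -h z]) ∧
    -- after removing the term (2h(w)/(z-w))·E₁₂, it extends analytically to w
    (∃ G : ℂ → Matrix (Fin 2) (Fin 2) ℂ,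
      (∀ i j, AnalyticAt ℂ (fun z => G z i j) w) ∧
      ∀ᶠ z in 𝓝[≠] w,
        G z = gaugeTr w lam h z - (2 * h w / (z - w)) • !![0, 1; 0, 0]) ∧
    -- the gauge transform itself extends analytically to w iff h(w) = 0
    ((∃ G : ℂ → Matrix (Fin 2) (Fin 2) ℂ,
      (∀ i j, AnalyticAt ℂ (fun z => G z i j) w) ∧
      ∀ᶠ z in 𝓝[≠] w, G z = gaugeTr w lam h z) ↔ h w = 0) := by
  have hmem : ∀ᶠ z in 𝓝[≠] w, z ≠ w := by
    filter_upwards [self_mem_nhdsWithin] with z hz using hz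
  have part1 : ∀ᶠ z in 𝓝[≠] w,
      gaugeTr w lam h z = !![h z, lam + 2 * h z / (z - w); 1, -h z] := by
    filter_upwards [hmem] with z hz using gaugeTr_eq lam h hz
  -- the canonical regularization
  set q : ℂ → ℂ := dslope h w with hq
  have hqa : AnalyticAt ℂ q w := dslope_analytic hh
  set G0 : ℂ → Matrix (Fin 2) (Fin 2) ℂ :=
    fun z => !![h z, lam + 2 * q z; 1, -h z] with hG0
  have hG0a : ∀ i j, AnalyticAt ℂ (fun z => G0 z i j) w := by
    intro i j
    fin_cases i <;> fin_cases j <;> simp [hG0]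
    · exact hh
    · exact analyticAt_const.add (analyticAt_const.mul hqa)
    · exact analyticAt_const
    · exact hh.neg
  have hqz : ∀ z : ℂ, z ≠ w → q z = (h z - h w) / (z - w) := by
    intro z hz
    rw [hq, dslope_of_ne h hz, slope_def_field]
  have part2ev : ∀ᶠ z in 𝓝[≠] w,
      G0 z = gaugeTr w lam h z - (2 * h w / (z - w)) • !![0, 1; 0, 0] := by
    filter_upwards [hmem, part1] with z hz h1
    have hzw : z - w ≠ 0 := sub_ne_zero.2 hz
    rw [h1, hG0]
    ext i j
    fin_cases i <;> fin_cases j <;>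
      · simp [hqz z hz, Matrix.sub_apply, Matrix.smul_apply]
        try field_simp
        try ring
  refine ⟨part1, ⟨G0, hG0a, part2ev⟩, ?_, ?_⟩
  · rintro ⟨G, hGa, hGev⟩
    -- Compare G with G0: their (0,1) entries differ by 2 h w / (z - w)
    have hev : ∀ᶠ z in 𝓝[≠] w,
        (z - w) * (G z 0 1 - G0 z 0 1) = 2 * h w := by
      filter_upwards [hmem, hGev, part2ev] with z hz h1 h2
      have hzw : z - w ≠ 0 := sub_ne_zero.2 hz
      rw [h1, h2]
      simp [Matrix.sub_apply, Matrix.smul_apply]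
      field_simp
    have hc : Filter.Tendsto (fun z => (z - w) * (G z 0 1 - G0 z 0 1)) (𝓝[≠] w)
        (𝓝 0) := by
      have : Filter.Tendsto (fun z => (z - w) * (G z 0 1 - G0 z 0 1)) (𝓝 w)
          (𝓝 ((w - w) * (G w 0 1 - G0 w 0 1))) := by
        apply Filter.Tendsto.mul
        · exact (continuous_id.sub continuous_const).continuousAt
        · exact ((hGa 0 1).continuousAt.sub (hG0a 0 1).continuousAt)
      simpa using this.mono_left nhdsWithin_le_nhds
    have : Filter.Tendsto (fun _ : ℂ => (2 : ℂ) * h w) (𝓝[≠] w) (𝓝 0) :=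
      hc.congr' hev
    have h20 : (0 : ℂ) = 2 * h w :=
      tendsto_nhds_unique this tendsto_const_nhds
    exact (mul_eq_zero.mp h20.symm).resolve_left two_ne_zero
  · intro hw0
    refine ⟨G0, hG0a, ?_⟩
    filter_upwards [part2ev] with z hz
    simp [hz, hw0]
end

section
/- Let n ∈ ℕ, let χ = (χ_1,…,χ_n) ∈ ℂ^n, and let S be a set of polynomials in MvPolynomial (Fin n) ℂ. Define the directional derivative D_χ P = Σ_{i} χ_i · (∂P/∂X_i), and for u ∈ ℂ let τ_u be the ℂ-algebra endomorphism of MvPolynomial (Fin n) ℂ determined by X_i ↦ X_i + u·χ_i. Then the ℂ-subalgebra generated by { D_χ^m P : P ∈ S, m ∈ ℕ } equals the ℂ-subalgebra generated by { τ_u(P) : P ∈ S, u ∈ ℂ }. -/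
open MvPolynomial

/-- The directional derivative `D_χ P = Σ_i χ_i · ∂P/∂X_i`. -/
noncomputable def dirDeriv {n : ℕ} (χ : Fin n → ℂ) (P : MvPolynomial (Fin n) ℂ) :
    MvPolynomial (Fin n) ℂ :=
  ∑ i, MvPolynomial.C (χ i) * MvPolynomial.pderiv i P

/-- The shift `τ_u : X_i ↦ X_i + u·χ_i`, a `ℂ`-algebra endomorphism. -/
noncomputable def shiftBy {n : ℕ} (χ : Fin n → ℂ) (u : ℂ) :
    MvPolynomial (Fin n) ℂ →ₐ[ℂ] MvPolynomial (Fin n) ℂ :=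
  MvPolynomial.aeval fun i => MvPolynomial.X i + MvPolynomial.C (u * χ i)

/- ### Auxiliary material -/

section Vandermonde

variable {A : Type*} [CommRing A] [Algebra ℂ A]

/-- Every coefficient of a polynomial over a `ℂ`-algebra is a `ℂ`-linear combination of
finitely many of its evaluations at scalar points (via Vandermonde/Lagrange). -/
lemma coeff_mem_span_eval (q : Polynomial A) (m : ℕ) :
    q.coeff m ∈ Submodule.span ℂ (Set.range fun u : ℂ => q.eval (algebraMap ℂ A u)) := by
  set N := q.natDegree + 1 with hN
  by_cases hm : m < N
  · set V : Matrix (Fin N) (Fin N) ℂ := Matrix.vandermonde (fun j => (j : ℂ)) with hV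
    have hdet : IsUnit V.det := by
      rw [hV, Matrix.det_vandermonde, isUnit_iff_ne_zero]
      refine Finset.prod_ne_zero_iff.2 fun i _ => Finset.prod_ne_zero_iff.2 fun j hj => ?_
      have hij : i < j := Finset.mem_Ioi.1 hj
      have : ((i : ℕ) : ℂ) ≠ ((j : ℕ) : ℂ) := by
        exact_mod_cast (Fin.lt_iff_val_lt_val.1 hij).ne
      exact sub_ne_zero.2 (Ne.symm this)
    have hWV : V⁻¹ * V = 1 := Matrix.nonsing_inv_mul V hdet
    have heval : ∀ j : Fin N, q.eval (algebraMap ℂ A ((j : ℕ) : ℂ))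
        = ∑ k : Fin N, V j k • q.coeff (k : ℕ) := by
      intro j
      rw [Polynomial.eval_eq_sum_range' (Nat.lt_succ_self _),
        ← Fin.sum_univ_eq_sum_range (fun k => q.coeff k * (algebraMap ℂ A ((j : ℕ) : ℂ)) ^ k) N]
      refine Finset.sum_congr rfl fun k _ => ?_
      rw [hV, Matrix.vandermonde_apply, Algebra.smul_def, ← map_pow, mul_comm]
    have key : q.coeff m
        = ∑ j : Fin N, (V⁻¹ ⟨m, hm⟩ j) • q.eval (algebraMap ℂ A ((j : ℕ) : ℂ)) := by
      have : ∑ j : Fin N, (V⁻¹ ⟨m, hm⟩ j) • q.eval (algebraMap ℂ A ((j : ℕ) : ℂ))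
          = ∑ k : Fin N, ((V⁻¹ * V) ⟨m, hm⟩ k) • q.coeff (k : ℕ) := by
        simp only [heval, Finset.smul_sum, smul_smul, Matrix.mul_apply, Finset.sum_smul]
        exact Finset.sum_comm
      rw [this, hWV]
      simp [Matrix.one_apply]
    rw [key]
    exact Submodule.sum_mem _ fun j _ => Submodule.smul_mem _ _
      (Submodule.subset_span ⟨_, rfl⟩)
  · have : q.coeff m = 0 := Polynomial.coeff_eq_zero_of_natDegree_lt (by omega)
    simp [this]

end Vandermonde

section Taylor

variable {n : ℕ} (χ : Fin n → ℂ)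

lemma dirDeriv_C (a : ℂ) : dirDeriv χ (MvPolynomial.C a) = 0 := by
  simp [dirDeriv, pderiv_C]

lemma dirDeriv_add (p q : MvPolynomial (Fin n) ℂ) :
    dirDeriv χ (p + q) = dirDeriv χ p + dirDeriv χ q := by
  simp [dirDeriv, mul_add, Finset.sum_add_distrib]

lemma dirDeriv_X (i : Fin n) : dirDeriv χ (MvPolynomial.X i) = MvPolynomial.C (χ i) := by
  simp [dirDeriv, pderiv_X, Pi.single_apply]

lemma dirDeriv_mul (p q : MvPolynomial (Fin n) ℂ) :
    dirDeriv χ (p * q) = dirDeriv χ p * q + p * dirDeriv χ q := by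
  simp only [dirDeriv, pderiv_mul, mul_add, Finset.sum_add_distrib, Finset.sum_mul,
    Finset.mul_sum]
  congr 1
  · exact Finset.sum_congr rfl fun i _ => by ring
  · exact Finset.sum_congr rfl fun i _ => by ring

/-- The generating algebra morphism `Φ : P ↦ (u ↦ P(y + uχ))` with `u` a polynomial variable. -/
noncomputable def phiShift : MvPolynomial (Fin n) ℂ →ₐ[ℂ] Polynomial (MvPolynomial (Fin n) ℂ) :=
  MvPolynomial.aeval fun i =>
    Polynomial.C (MvPolynomial.X i) + Polynomial.X * Polynomial.C (MvPolynomial.C (χ i))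

lemma eval_phiShift (u : ℂ) (P : MvPolynomial (Fin n) ℂ) :
    Polynomial.eval (MvPolynomial.C u) (phiShift χ P) = shiftBy χ u P := by
  have : (((Polynomial.aeval (MvPolynomial.C u :
        MvPolynomial (Fin n) ℂ)).restrictScalars ℂ).comp (phiShift χ)) = shiftBy χ u := by
    apply MvPolynomial.algHom_ext
    intro i
    simp only [AlgHom.coe_comp, AlgHom.coe_restrictScalars', Function.comp_apply,
      phiShift, shiftBy, MvPolynomial.aeval_X, map_add, map_mul, Polynomial.aeval_C,
      Polynomial.aeval_X, Algebra.algebraMap_self, RingHom.id_apply, MvPolynomial.C_mul]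
  have h := DFunLike.congr_fun this P
  simpa [Polynomial.coe_aeval_eq_eval] using h

lemma derivative_phiShift (P : MvPolynomial (Fin n) ℂ) :
    Polynomial.derivative (phiShift χ P) = phiShift χ (dirDeriv χ P) := by
  induction P using MvPolynomial.induction_on with
  | C a => simp [phiShift, dirDeriv_C, MvPolynomial.algebraMap_eq]
  | add p q hp hq => simp [map_add, dirDeriv_add, hp, hq]
  | mul_X p i hp =>
    rw [map_mul, Polynomial.derivative_mul, hp, dirDeriv_mul, dirDeriv_X, map_add, map_mul]
    congr 1
    simp [phiShift, MvPolynomial.algebraMap_eq]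

lemma iterate_derivative_phiShift (P : MvPolynomial (Fin n) ℂ) (m : ℕ) :
    Polynomial.derivative^[m] (phiShift χ P) = phiShift χ ((dirDeriv χ)^[m] P) := by
  induction m with
  | zero => rfl
  | succ m ih =>
    rw [Function.iterate_succ_apply', ih, derivative_phiShift,
      Function.iterate_succ_apply']

lemma coeff_zero_phiShift (P : MvPolynomial (Fin n) ℂ) :
    (phiShift χ P).coeff 0 = P := by
  rw [Polynomial.coeff_zero_eq_eval_zero]
  have h0 : (0 : MvPolynomial (Fin n) ℂ) = MvPolynomial.C (0 : ℂ) := by simp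
  rw [h0, eval_phiShift]
  have : shiftBy χ 0 = AlgHom.id ℂ (MvPolynomial (Fin n) ℂ) := by
    apply MvPolynomial.algHom_ext
    intro i
    simp [shiftBy]
  rw [this]; rfl

/-- The Taylor identity: `D_χ^m P = m! • coeff_m (Φ P)`. -/
lemma iterate_dirDeriv_eq (P : MvPolynomial (Fin n) ℂ) (m : ℕ) :
    (dirDeriv χ)^[m] P = ((Nat.factorial m) : ℂ) • (phiShift χ P).coeff m := by
  have h1 : (dirDeriv χ)^[m] P = (Polynomial.derivative^[m] (phiShift χ P)).coeff 0 := by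
    rw [iterate_derivative_phiShift, coeff_zero_phiShift]
  rw [h1, Polynomial.coeff_iterate_derivative, zero_add, Nat.descFactorial_self,
    ← Nat.cast_smul_eq_nsmul ℂ]

lemma coeff_phiShift_eq (P : MvPolynomial (Fin n) ℂ) (m : ℕ) :
    (phiShift χ P).coeff m = ((Nat.factorial m) : ℂ)⁻¹ • (dirDeriv χ)^[m] P := by
  rw [iterate_dirDeriv_eq, smul_smul, inv_mul_cancel₀, one_smul]
  exact_mod_cast (Nat.factorial_ne_zero m)

end Taylor

/-- The subalgebra generated by the iterated directional derivatives `D_χ^m P` equals the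
subalgebra generated by the shifted polynomials `τ_u P`, `u ∈ ℂ`. -/
theorem shift_of_argument_subalgebra_eq {n : ℕ} (χ : Fin n → ℂ)
    (S : Set (MvPolynomial (Fin n) ℂ)) :
    Algebra.adjoin ℂ {q | ∃ P ∈ S, ∃ m : ℕ, q = (dirDeriv χ)^[m] P}
      = Algebra.adjoin ℂ {q | ∃ P ∈ S, ∃ u : ℂ, q = shiftBy χ u P} := by
  apply le_antisymm
  · apply Algebra.adjoin_le
    rintro q ⟨P, hP, m, rfl⟩
    rw [iterate_dirDeriv_eq]
    apply Subalgebra.smul_mem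
    have hspan : Submodule.span ℂ
        (Set.range fun u : ℂ => (phiShift χ P).eval (algebraMap ℂ _ u))
        ≤ Subalgebra.toSubmodule (Algebra.adjoin ℂ {q | ∃ P ∈ S, ∃ u : ℂ, q = shiftBy χ u P}) := by
      rw [Submodule.span_le]
      rintro _ ⟨u, rfl⟩
      simp only [SetLike.mem_coe, Subalgebra.mem_toSubmodule, MvPolynomial.algebraMap_eq,
        eval_phiShift]
      exact Algebra.subset_adjoin ⟨P, hP, u, rfl⟩
    exact hspan (coeff_mem_span_eval (phiShift χ P) m)
  · apply Algebra.adjoin_le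
    rintro q ⟨P, hP, u, rfl⟩
    rw [← eval_phiShift, Polynomial.eval_eq_sum_range]
    apply Subalgebra.sum_mem
    intro k _
    have : (phiShift χ P).coeff k * MvPolynomial.C u ^ k
        = (u ^ k) • (phiShift χ P).coeff k := by
      rw [Algebra.smul_def, MvPolynomial.algebraMap_eq, map_pow, mul_comm]
    rw [this, coeff_phiShift_eq]
    apply Subalgebra.smul_mem
    apply Subalgebra.smul_mem
    exact Algebra.subset_adjoin ⟨P, hP, k, rfl⟩
end

section
/- Let x₀ ∈ ℂ and let v = 2T^{−2} + Σ_{n≥−1} v_n T^n be a formal Laurent series over ℂ. Suppose there exists a formal power series U ∈ ℂ[[T]] such that u = −T^{−1} + U satisfies u² + u′ = v and U_0 + x₀/2 = 0 (U_0 the constant term of U). Then v_{−1} = x₀ and (1/4)·x₀³ − v_0·x₀ + v_1 = 0. -/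
/-- If `v = 2T⁻² + Σ_{n ≥ -1} vₙ Tⁿ` is the Miura transform `u² + u′` of `u = -T⁻¹ + U`
with `U₀ + x₀/2 = 0`, then `v₋₁ = x₀` and `(1/4)x₀³ - v₀·x₀ + v₁ = 0`. -/
theorem no_monodromy_conditions_of_local_miura (x₀ : ℂ) (V : LaurentSeries ℂ)
    (h₂ : V.coeff (-2) = 2)
    (hlow : ∀ n : ℤ, n < -2 → V.coeff n = 0)
    (U : PowerSeries ℂ)
    (hU : (-(HahnSeries.single (-1 : ℤ) (1 : ℂ)) + HahnSeries.ofPowerSeries ℤ ℂ U) ^ 2 +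
        lderiv (-(HahnSeries.single (-1 : ℤ) (1 : ℂ)) + HahnSeries.ofPowerSeries ℤ ℂ U) = V)
    (h₀ : PowerSeries.coeff 0 U + x₀ / 2 = 0) :
    V.coeff (-1) = x₀ ∧
      (1 / 4 : ℂ) * x₀ ^ 3 - V.coeff 0 * x₀ + V.coeff 1 = 0 := by
  set s : LaurentSeries ℂ := HahnSeries.single (-1 : ℤ) (1 : ℂ) with hs
  set f : LaurentSeries ℂ := HahnSeries.ofPowerSeries ℤ ℂ U with hf
  have hfc : ∀ n : ℕ, f.coeff (n : ℤ) = PowerSeries.coeff n U := fun n =>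
    HahnSeries.ofPowerSeries_apply_coeff U n
  have hfneg : ∀ n : ℤ, n < 0 → f.coeff n = 0 := by
    intro n hn
    rw [hf, HahnSeries.ofPowerSeries_apply]
    apply HahnSeries.embDomain_notin_range
    rintro ⟨m, hm⟩
    have hm' : (m : ℤ) = n := hm
    omega
  have hsx : ∀ (x : LaurentSeries ℂ) (n : ℤ), (s * x).coeff n = x.coeff (n + 1) := by
    intro x n
    have h := HahnSeries.coeff_single_mul_add (r := (1 : ℂ)) (x := x) (a := n + 1) (b := (-1 : ℤ))
    rw [show n + 1 + (-1 : ℤ) = n by ring] at h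
    rw [← hs] at h
    rw [h, one_mul]
  have hld : ∀ (x : LaurentSeries ℂ) (n : ℤ), (lderiv x).coeff n = ((n : ℂ) + 1) * x.coeff (n + 1) := by
    intro x n
    rw [lderiv, ← hs, hsx]
    push_cast
    ring_nf
  have hss : s * s = HahnSeries.single (-2 : ℤ) (1 : ℂ) := by
    rw [hs, HahnSeries.single_mul_single]; norm_num
  have hVc : ∀ n : ℤ, V.coeff n = (s * s).coeff n - 2 * f.coeff (n + 1) +
      (f * f).coeff n + ((n : ℂ) + 1) * (-s + f).coeff (n + 1) := by
    intro n
    rw [← hU]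
    have e1 : (-s + f) ^ 2 = s * s - (s * f + s * f) + f * f := by ring
    rw [e1]
    simp only [HahnSeries.coeff_add, HahnSeries.coeff_sub, hld, hsx]
    ring
  have hff : f * f = HahnSeries.ofPowerSeries ℤ ℂ (U * U) := by rw [hf, map_mul]
  have hffneg : (f * f).coeff (-1 : ℤ) = 0 := by
    rw [hff]
    have := hfneg  -- not directly usable; redo
    rw [HahnSeries.ofPowerSeries_apply]
    apply HahnSeries.embDomain_notin_range
    rintro ⟨m, hm⟩
    have hm' : (m : ℤ) = -1 := hm
    omega
  have hff0 : (f * f).coeff (0 : ℤ) = PowerSeries.coeff 0 U * PowerSeries.coeff 0 U := by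
    rw [hff, show (0 : ℤ) = ((0 : ℕ) : ℤ) by norm_num, HahnSeries.ofPowerSeries_apply_coeff]
    simp [PowerSeries.coeff_mul]
  have hff1 : (f * f).coeff (1 : ℤ) = 2 * (PowerSeries.coeff 0 U * PowerSeries.coeff 1 U) := by
    rw [hff, show (1 : ℤ) = ((1 : ℕ) : ℤ) by norm_num, HahnSeries.ofPowerSeries_apply_coeff]
    rw [PowerSeries.coeff_mul]
    rw [Finset.Nat.sum_antidiagonal_eq_sum_range_succ_mk]
    simp [Finset.sum_range_succ]
    ring
  have huc : ∀ k : ℤ, 0 ≤ k → (-s + f).coeff k = f.coeff k := by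
    intro k hk
    simp only [HahnSeries.coeff_add, HahnSeries.coeff_neg, hs, HahnSeries.coeff_single]
    rw [if_neg (by omega)]
    ring
  have hf0 : f.coeff (0 : ℤ) = PowerSeries.coeff 0 U := hfc 0
  have hf1 : f.coeff (1 : ℤ) = PowerSeries.coeff 1 U := hfc 1
  have hf2 : f.coeff (2 : ℤ) = PowerSeries.coeff 2 U := hfc 2
  have hVm1 := hVc (-1)
  have hV0 := hVc 0
  have hV1 := hVc 1
  rw [hss] at hVm1 hV0 hV1
  norm_num [HahnSeries.coeff_single, huc 0 le_rfl, huc 1 zero_le_one, huc 2 (by norm_num),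
    hffneg, hff0, hff1, hf0, hf1, hf2] at hVm1 hV0 hV1
  rw [← PowerSeries.coeff_zero_eq_constantCoeff_apply] at hVm1 hV0 hV1
  constructor
  · rw [hVm1]; linear_combination (-2 : ℂ) * h₀
  · rw [hV0, hV1]
    linear_combination (x₀ ^ 2 / 2 - x₀ * PowerSeries.coeff 0 U + 2 * PowerSeries.coeff 1 U) * h₀
end
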